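/- arXiv:0810.1028 — 5 statements merged into one kernel-verified Lean document; each statement's English description precedes it below -/
import Mathlib

section
/- Let R be the valuation ring of a field K complete with respect to a non-discrete rank-1 valuation w. Then the map sending a power series f(X) = Σ f_i X^i ∈ R[[X]] to inf_i w(f_i) is a valuation on R[[X]]; in particular it is multiplicative: w(f·g) = w(f) + w(g) for all f, g ∈ R[[X]]. -/
open PowerSeries Filter Set

/-- An additive rank-1 (real-valued) non-archimedean valuation on a field `K`,
with values in `EReal` (real numbers on nonzero elements, `⊤` at `0`). -/
structure AddRealValuation (K : Type*) [Field K] where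
  w : K → EReal
  map_zero' : w 0 = ⊤
  finite' : ∀ x : K, x ≠ 0 → ∃ r : ℝ, w x = (r : EReal)
  map_one' : w 1 = 0
  map_mul' : ∀ x y : K, w (x * y) = w x + w y
  map_neg' : ∀ x : K, w (-x) = w x
  add_le' : ∀ x y : K, min (w x) (w y) ≤ w (x + y)

namespace AddRealValuation

variable {K : Type*} [Field K] (v : AddRealValuation K)

/-- The valuation is non-discrete: there exist elements of arbitrarily
small positive valuation. -/
def Nondiscrete : Prop := ∀ ε : ℝ, 0 < ε → ∃ x : K, 0 < v.w x ∧ v.w x < (ε : EReal)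

/-- `K` is complete with respect to `v`: every Cauchy sequence converges. -/
def IsComplete : Prop :=
  ∀ u : ℕ → K, (∀ M : ℝ, ∃ N : ℕ, ∀ m ≥ N, ∀ n ≥ N, (M : EReal) ≤ v.w (u m - u n)) →
    ∃ L : K, ∀ M : ℝ, ∃ N : ℕ, ∀ n ≥ N, (M : EReal) ≤ v.w (u n - L)

/-- The valuation ring `R = {x : K | w x ≥ 0}` of `v`. -/
def subring : Subring K where
  carrier := {x | 0 ≤ v.w x}
  zero_mem' := by show (0:EReal) ≤ v.w 0; rw [v.map_zero']; exact le_top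
  one_mem' := by show (0:EReal) ≤ v.w 1; rw [v.map_one']
  add_mem' := fun hx hy => le_trans (le_min hx hy) (v.add_le' _ _)
  mul_mem' := fun hx hy => by
    show (0:EReal) ≤ v.w _; rw [v.map_mul']; exact add_nonneg hx hy
  neg_mem' := fun {x} hx => by show (0:EReal) ≤ v.w (-x); rw [v.map_neg']; exact hx

/-- The extension of `v` to power series over `K`: the infimum of the
valuations of the coefficients. -/
noncomputable def wS (f : PowerSeries K) : EReal := ⨅ i : ℕ, v.w (PowerSeries.coeff i f)

/-- The extension of `v` to power series over the valuation ring `R` of `v`. -/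
noncomputable def wR (f : PowerSeries v.subring) : EReal :=
  ⨅ i : ℕ, v.w ((PowerSeries.coeff i f : v.subring) : K)

/-- `f` is a convergent power series (lies in the Tate algebra `K{X}`):
the valuations of the coefficients tend to `∞`. -/
def Conv (f : PowerSeries K) : Prop :=
  ∀ M : ℝ, ∃ N : ℕ, ∀ i ≥ N, (M : EReal) ≤ v.w (PowerSeries.coeff i f)

/-- The series `f(c) = Σ fᵢ cⁱ` (with `f` over the valuation ring `R`) converges to `0`:
the valuations of the partial sums tend to `∞`. -/
def EvalZeroR (f : PowerSeries v.subring) (c : v.subring) : Prop :=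
  ∀ M : ℝ, ∃ N : ℕ, ∀ n ≥ N,
    (M : EReal) ≤ v.w ((∑ i ∈ Finset.range n, PowerSeries.coeff i f * c ^ i : v.subring) : K)

end AddRealValuation

/-- `𝓕` is a defining family of rank-1 valuations exhibiting the domain `D`
(with fraction field `F`) as a generalized Krull domain:
(a) for each `v ∈ 𝓕` the valuation ring of `v` is the localization of `D`
at the prime `{a : v a > 0}`; (b) `⋂ D_v = D`; (c) each nonzero `a ∈ D`
satisfies `v a = 0` for all but finitely many `v ∈ 𝓕`. -/
def IsGKFamily (D : Type*) [CommRing D] [IsDomain D] (F : Type*) [Field F]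
    [Algebra D F] [IsFractionRing D F] (𝓕 : Set (AddRealValuation F)) : Prop :=
  (∀ u ∈ 𝓕, ∀ x : F, 0 ≤ u.w x ↔
    ∃ a b : D, b ≠ 0 ∧ ¬ 0 < u.w (algebraMap D F b) ∧ x * algebraMap D F b = algebraMap D F a) ∧
  (∀ x : F, (∀ u ∈ 𝓕, 0 ≤ u.w x) → ∃ a : D, x = algebraMap D F a) ∧
  (∀ a : D, a ≠ 0 → {u ∈ 𝓕 | u.w (algebraMap D F a) ≠ 0}.Finite)

namespace AddRealValuation

variable {K : Type*} [Field K] (v : AddRealValuation K)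

lemma w_ne_top {x : K} (hx : x ≠ 0) : v.w x ≠ ⊤ := by
  obtain ⟨r, hr⟩ := v.finite' x hx
  simp [hr]

lemma le_w_sum {ι : Type*} (s : Finset ι) (t : ι → K) (M : EReal)
    (h : ∀ i ∈ s, M ≤ v.w (t i)) : M ≤ v.w (∑ i ∈ s, t i) := by
  induction s using Finset.cons_induction with
  | empty => simpa [v.map_zero'] using le_top
  | cons i s hi ih =>
    rw [Finset.sum_cons]
    exact le_trans (le_min (h i (Finset.mem_cons_self i s))
      (ih fun j hj => h j (Finset.mem_cons_of_mem hj))) (v.add_le' _ _)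

lemma lt_w_sum {ι : Type*} (s : Finset ι) (t : ι → K) (M : EReal) (hM : M ≠ ⊤)
    (h : ∀ i ∈ s, M < v.w (t i)) : M < v.w (∑ i ∈ s, t i) := by
  induction s using Finset.cons_induction with
  | empty =>
    simp only [Finset.sum_empty, v.map_zero']
    exact lt_top_iff_ne_top.2 hM
  | cons i s hi ih =>
    rw [Finset.sum_cons]
    exact lt_of_lt_of_le (lt_min (h i (Finset.mem_cons_self i s))
      (ih fun j hj => h j (Finset.mem_cons_of_mem hj))) (v.add_le' _ _)

lemma w_add_eq {x y : K} (h : v.w x < v.w y) : v.w (x + y) = v.w x := by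
  have h1 : v.w x ≤ v.w (x + y) := le_trans (le_min le_rfl h.le) (v.add_le' x y)
  refine le_antisymm ?_ h1
  have h3 := v.add_le' (x + y) (-y)
  rw [v.map_neg', add_neg_cancel_right] at h3
  rcases le_or_gt (v.w (x + y)) (v.w y) with hc | hc
  · rwa [min_eq_left hc] at h3
  · rw [min_eq_right hc.le] at h3
    exact absurd h3 h.not_ge

lemma w_sum_eq {ι : Type*} [DecidableEq ι] (s : Finset ι) (t : ι → K) (i0 : ι)
    (hi0 : i0 ∈ s) (hne : v.w (t i0) ≠ ⊤)
    (h : ∀ i ∈ s, i ≠ i0 → v.w (t i0) < v.w (t i)) :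
    v.w (∑ i ∈ s, t i) = v.w (t i0) := by
  rw [← Finset.add_sum_erase s t hi0]
  exact v.w_add_eq (v.lt_w_sum _ _ _ hne fun i hi =>
    h i (Finset.mem_of_mem_erase hi) (Finset.ne_of_mem_erase hi))

/-- A function `ℕ → EReal` eventually greater than one of its values attains its
infimum. -/
lemma exists_min (F : ℕ → EReal) (N k : ℕ) (hk : k ≤ N)
    (h : ∀ i, N < i → F k < F i) : ∃ i1, ∀ j, F i1 ≤ F j := by
  obtain ⟨i1, hi1mem, hi1⟩ := Finset.exists_min_image (Finset.range (N + 1)) F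
    ⟨0, Finset.mem_range.2 (Nat.succ_pos N)⟩
  refine ⟨i1, fun j => ?_⟩
  rcases le_or_gt j N with hj | hj
  · exact hi1 j (Finset.mem_range.2 (Nat.lt_succ_of_le hj))
  · exact le_trans (hi1 k (Finset.mem_range.2 (Nat.lt_succ_of_le hk))) (h j hj).le

/-- The key multiplicativity lemma for the Gauss valuation, over `K`. -/
lemma wS_mul (f g : PowerSeries K) (hf0 : ∀ i, 0 ≤ v.w (PowerSeries.coeff i f))
    (hg0 : ∀ i, 0 ≤ v.w (PowerSeries.coeff i g)) (hf : f ≠ 0) (hg : g ≠ 0) :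
    v.wS (f * g) = v.wS f + v.wS g := by
  classical
  obtain ⟨k0, hk0⟩ : ∃ n, PowerSeries.coeff n f ≠ 0 := by
    by_contra h; push_neg at h; exact hf (PowerSeries.ext fun n => by simp [h n])
  obtain ⟨l0, hl0⟩ : ∃ n, PowerSeries.coeff n g ≠ 0 := by
    by_contra h; push_neg at h; exact hg (PowerSeries.ext fun n => by simp [h n])
  have ha0 : (0 : EReal) ≤ v.wS f := le_iInf hf0
  have hb0 : (0 : EReal) ≤ v.wS g := le_iInf hg0
  have hatop : v.wS f ≠ ⊤ := ne_top_of_le_ne_top (v.w_ne_top hk0) (iInf_le _ k0)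
  have hbtop : v.wS g ≠ ⊤ := ne_top_of_le_ne_top (v.w_ne_top hl0) (iInf_le _ l0)
  have habot : v.wS f ≠ ⊥ := ne_bot_of_le_ne_bot (by simp) ha0
  have hbbot : v.wS g ≠ ⊥ := ne_bot_of_le_ne_bot (by simp) hb0
  set ar : ℝ := (v.wS f).toReal with har_def
  set br : ℝ := (v.wS g).toReal with hbr_def
  have har : v.wS f = (ar : EReal) := (EReal.coe_toReal hatop habot).symm
  have hbr : v.wS g = (br : EReal) := (EReal.coe_toReal hbtop hbbot).symm
  -- lower bound
  have hlow : v.wS f + v.wS g ≤ v.wS (f * g) := by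
    refine le_iInf fun n => ?_
    rw [PowerSeries.coeff_mul]
    refine v.le_w_sum _ _ _ fun p _ => ?_
    rw [v.map_mul']
    exact add_le_add (iInf_le _ p.1) (iInf_le _ p.2)
  -- upper bound, up to ε
  have hupper : ∀ ε : ℝ, 0 < ε → v.wS (f * g) ≤ ((ar + br + ε : ℝ) : EReal) := by
    intro ε hε
    obtain ⟨k, hk⟩ : ∃ k, v.w (PowerSeries.coeff k f) < ((ar + ε / 4 : ℝ) : EReal) := by
      have hlt : v.wS f < ((ar + ε / 4 : ℝ) : EReal) := by
        rw [har]; exact_mod_cast (by linarith : ar < ar + ε / 4)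
      exact iInf_lt_iff.mp hlt
    obtain ⟨l, hl⟩ : ∃ l, v.w (PowerSeries.coeff l g) < ((br + ε / 4 : ℝ) : EReal) := by
      have hlt : v.wS g < ((br + ε / 4 : ℝ) : EReal) := by
        rw [hbr]; exact_mod_cast (by linarith : br < br + ε / 4)
      exact iInf_lt_iff.mp hlt
    set s : ℝ := ε / (4 * ((k : ℝ) + (l : ℝ) + 1)) with hs_def
    have hs : 0 < s := by positivity
    have hs4 : ((k : ℝ) + (l : ℝ) + 1) * s = ε / 4 := by
      rw [hs_def]; field_simp
    set F : ℕ → EReal := fun i => v.w (PowerSeries.coeff i f) + (((i : ℝ) * s : ℝ) : EReal)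
      with hF_def
    set G : ℕ → EReal := fun j => v.w (PowerSeries.coeff j g) + (((j : ℝ) * s : ℝ) : EReal)
      with hG_def
    have hFk : F k ≤ ((ar + ε / 4 + (k : ℝ) * s : ℝ) : EReal) := by
      have := EReal.add_lt_add_right_coe hk ((k : ℝ) * s)
      rw [← EReal.coe_add] at this
      exact this.le
    have hGl : G l ≤ ((br + ε / 4 + (l : ℝ) * s : ℝ) : EReal) := by
      have := EReal.add_lt_add_right_coe hl ((l : ℝ) * s)
      rw [← EReal.coe_add] at this
      exact this.le
    -- lower bound for F i and G j
    have hFlow : ∀ i : ℕ, ((ar + (i : ℝ) * s : ℝ) : EReal) ≤ F i := by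
      intro i
      rw [hF_def]
      calc ((ar + (i : ℝ) * s : ℝ) : EReal) = ((ar : ℝ) : EReal) + (((i : ℝ) * s : ℝ) : EReal) := by
            rw [← EReal.coe_add]
        _ ≤ _ := add_le_add_left (har ▸ iInf_le _ i) _
    have hGlow : ∀ j : ℕ, ((br + (j : ℝ) * s : ℝ) : EReal) ≤ G j := by
      intro j
      rw [hG_def]
      calc ((br + (j : ℝ) * s : ℝ) : EReal) = ((br : ℝ) : EReal) + (((j : ℝ) * s : ℝ) : EReal) := by
            rw [← EReal.coe_add]
        _ ≤ _ := add_le_add_left (hbr ▸ iInf_le _ j) _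
    -- existence of minima
    have hFex : ∃ i1, ∀ j, F i1 ≤ F j := by
      refine exists_min F (2 * k + l + 2) k (by omega) fun i hi => ?_
      refine lt_of_le_of_lt hFk (lt_of_lt_of_le ?_ (hFlow i))
      refine EReal.coe_lt_coe_iff.2 ?_
      have h' : ((2 * k + l + 2 : ℕ) : ℝ) < (i : ℝ) := Nat.cast_lt.mpr hi
      push_cast at h'
      nlinarith [hs, hs4]
    have hGex : ∃ j1, ∀ j, G j1 ≤ G j := by
      refine exists_min G (2 * l + k + 2) l (by omega) fun j hj => ?_
      refine lt_of_le_of_lt hGl (lt_of_lt_of_le ?_ (hGlow j))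
      refine EReal.coe_lt_coe_iff.2 ?_
      have h' : ((2 * l + k + 2 : ℕ) : ℝ) < (j : ℝ) := Nat.cast_lt.mpr hj
      push_cast at h'
      nlinarith [hs, hs4]
    set i0 : ℕ := Nat.find hFex with hi0_def
    set j0 : ℕ := Nat.find hGex with hj0_def
    have hi0 : ∀ j, F i0 ≤ F j := Nat.find_spec hFex
    have hj0 : ∀ j, G j0 ≤ G j := Nat.find_spec hGex
    have hi0strict : ∀ i, i < i0 → F i0 < F i := by
      intro i hi
      have h1 := Nat.find_min hFex hi
      push_neg at h1
      obtain ⟨j, hj⟩ := h1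
      exact lt_of_le_of_lt (hi0 j) hj
    have hj0strict : ∀ j, j < j0 → G j0 < G j := by
      intro j hj
      have h1 := Nat.find_min hGex hj
      push_neg at h1
      obtain ⟨i, hi⟩ := h1
      exact lt_of_le_of_lt (hj0 i) hi
    -- finiteness facts
    have hFi0top : F i0 ≠ ⊤ :=
      ne_top_of_le_ne_top (EReal.coe_ne_top _)
        (le_trans (hi0 k) hFk)
    have hGj0top : G j0 ≠ ⊤ :=
      ne_top_of_le_ne_top (EReal.coe_ne_top _)
        (le_trans (hj0 l) hGl)
    have hFi0bot : F i0 ≠ ⊥ := by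
      refine ne_bot_of_le_ne_bot (EReal.coe_ne_bot _) (hFlow i0)
    have hwfi0top : v.w (PowerSeries.coeff i0 f) ≠ ⊤ := by
      intro h
      apply hFi0top
      rw [hF_def]
      simp only [h]
      exact EReal.top_add_of_ne_bot (EReal.coe_ne_bot _)
    have hwgj0top : v.w (PowerSeries.coeff j0 g) ≠ ⊤ := by
      intro h
      apply hGj0top
      rw [hG_def]
      simp only [h]
      exact EReal.top_add_of_ne_bot (EReal.coe_ne_bot _)
    -- the pivot coefficient of f * g
    set n : ℕ := i0 + j0 with hn_def
    have expand : ∀ i j : ℕ, F i + G j =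
        (v.w (PowerSeries.coeff i f) + v.w (PowerSeries.coeff j g)) +
          ((((i : ℝ) + (j : ℝ)) * s : ℝ) : EReal) := by
      intro i j
      rw [hF_def, hG_def]
      have : ((((i : ℝ) + (j : ℝ)) * s : ℝ) : EReal) =
          (((i : ℝ) * s : ℝ) : EReal) + (((j : ℝ) * s : ℝ) : EReal) := by
        rw [← EReal.coe_add]; norm_cast; push_cast; ring
      rw [this]
      beta_reduce
      ac_rfl
    have hkey : v.w (PowerSeries.coeff n (f * g)) =
        v.w (PowerSeries.coeff i0 f) + v.w (PowerSeries.coeff j0 g) := by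
      rw [PowerSeries.coeff_mul]
      have := v.w_sum_eq (Finset.HasAntidiagonal.antidiagonal n)
        (fun p => PowerSeries.coeff p.1 f * PowerSeries.coeff p.2 g) (i0, j0)
        (Finset.HasAntidiagonal.mem_antidiagonal.2 rfl)
        (by
          have hne : v.w (PowerSeries.coeff i0 f * PowerSeries.coeff j0 g) ≠ ⊤ := by
            rw [v.map_mul']; exact (EReal.add_lt_top hwfi0top hwgj0top).ne
          exact hne)
        (by
          rintro ⟨i, j⟩ hp hne
          simp only [Finset.HasAntidiagonal.mem_antidiagonal] at hp
          simp only [v.map_mul']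
          have hii0 : i ≠ i0 := by
            rintro rfl
            exact hne (by rw [show j = j0 by omega])
          have hFG : F i0 + G j0 < F i + G j := by
            rcases lt_or_gt_of_ne hii0 with hlt | hgt
            · exact EReal.add_lt_add_of_lt_of_le' (hi0strict i hlt) (hj0 j)
                (ne_bot_of_le_ne_bot (EReal.coe_ne_bot _) (hGlow j))
                (fun _ h' => absurd h' hGj0top)
            · have hjlt : j < j0 := by omega
              rw [add_comm (F i0) (G j0), add_comm (F i) (G j)]
              exact EReal.add_lt_add_of_lt_of_le' (hj0strict j hjlt) (hi0 i)
                (ne_bot_of_le_ne_bot (EReal.coe_ne_bot _) (hFlow i))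
                (fun _ h' => absurd h' hFi0top)
          rw [expand, expand] at hFG
          rw [show (i : ℝ) + (j : ℝ) = (i0 : ℝ) + (j0 : ℝ) by exact_mod_cast congrArg (Nat.cast (R := ℝ)) hp] at hFG
          by_contra hcon
          push_neg at hcon
          exact absurd (add_le_add_left hcon ((((i0 : ℝ) + (j0 : ℝ)) * s : ℝ) : EReal)) hFG.not_ge)
      rw [this, v.map_mul']
    -- conclude
    calc v.wS (f * g) ≤ v.w (PowerSeries.coeff n (f * g)) := iInf_le _ n
      _ = v.w (PowerSeries.coeff i0 f) + v.w (PowerSeries.coeff j0 g) := hkey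
      _ ≤ F i0 + G j0 := by
          rw [hF_def, hG_def]
          exact add_le_add (le_add_of_nonneg_right (EReal.coe_nonneg.2 (by positivity)))
            (le_add_of_nonneg_right (EReal.coe_nonneg.2 (by positivity)))
      _ ≤ F k + G l := add_le_add (hi0 k) (hj0 l)
      _ ≤ ((ar + ε / 4 + (k : ℝ) * s : ℝ) : EReal) + ((br + ε / 4 + (l : ℝ) * s : ℝ) : EReal) :=
          add_le_add hFk hGl
      _ = ((ar + ε / 4 + (k : ℝ) * s + (br + ε / 4 + (l : ℝ) * s) : ℝ) : EReal) := by
          rw [← EReal.coe_add]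
      _ ≤ ((ar + br + ε : ℝ) : EReal) := by
          refine EReal.coe_le_coe_iff.2 ?_
          nlinarith [hs, hs4, Nat.cast_nonneg (α := ℝ) k, Nat.cast_nonneg (α := ℝ) l]
  -- finish
  refine le_antisymm ?_ hlow
  rw [har, hbr, ← EReal.coe_add]
  by_contra hcon
  push_neg at hcon
  obtain ⟨z, hz1, hz2⟩ := EReal.exists_between_coe_real hcon
  have hzgt : ar + br < z := by exact_mod_cast hz1
  have := hupper (z - (ar + br)) (by linarith)
  rw [show ar + br + (z - (ar + br)) = z by ring] at this
  exact absurd (lt_of_lt_of_le hz2 this) (lt_irrefl _)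

end AddRealValuation

/-- For `K` complete with respect to a non-discrete rank-1 valuation
with valuation ring `R`, the map `f ↦ ⨅ i, w fᵢ` on `R[[X]]` is a valuation;
in particular it is multiplicative. -/
theorem statement1 {K : Type*} [Field K] (v : AddRealValuation K)
    (hcomp : v.IsComplete) (hnd : v.Nondiscrete)
    (f g : PowerSeries v.subring) :
    v.wR (f * g) = v.wR f + v.wR g ∧ min (v.wR f) (v.wR g) ≤ v.wR (f + g) := by
  constructor
  · -- multiplicativity
    by_cases hf : f = 0
    · subst hf
      have h0 : v.wR 0 = ⊤ := by
        simp [AddRealValuation.wR, v.map_zero']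
      rw [zero_mul, h0, EReal.top_add_of_ne_bot]
      exact ne_bot_of_le_ne_bot (by simp) (le_iInf fun i => (PowerSeries.coeff i g).2)
    by_cases hg : g = 0
    · subst hg
      have h0 : v.wR 0 = ⊤ := by
        simp [AddRealValuation.wR, v.map_zero']
      rw [mul_zero, h0, EReal.add_top_of_ne_bot]
      exact ne_bot_of_le_ne_bot (by simp) (le_iInf fun i => (PowerSeries.coeff i f).2)
    have hwr : ∀ h : PowerSeries v.subring,
        v.wR h = v.wS (PowerSeries.map v.subring.subtype h) := by
      intro h
      unfold AddRealValuation.wR AddRealValuation.wS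
      simp [PowerSeries.coeff_map]
    have hinj : Function.Injective (PowerSeries.map (R := v.subring) v.subring.subtype) := by
      intro p q hpq
      ext n
      have := congrArg (PowerSeries.coeff n) hpq
      rw [PowerSeries.coeff_map, PowerSeries.coeff_map] at this
      exact this
    have hmf : PowerSeries.map v.subring.subtype f ≠ 0 := by
      intro h0
      exact hf (hinj (by simpa using h0))
    have hmg : PowerSeries.map v.subring.subtype g ≠ 0 := by
      intro h0
      exact hg (hinj (by simpa using h0))
    rw [hwr, hwr, hwr, map_mul]
    exact v.wS_mul _ _
      (fun i => by rw [PowerSeries.coeff_map]; exact (PowerSeries.coeff i f).2)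
      (fun i => by rw [PowerSeries.coeff_map]; exact (PowerSeries.coeff i g).2)
      hmf hmg
  · -- ultrametric inequality
    refine le_iInf fun n => ?_
    have hc : ((PowerSeries.coeff n (f + g) : v.subring) : K) =
        ((PowerSeries.coeff n f : v.subring) : K) +
          ((PowerSeries.coeff n g : v.subring) : K) := by
      rw [map_add]; rfl
    rw [hc]
    exact le_trans (min_le_min (iInf_le _ n) (iInf_le _ n)) (v.add_le' _ _)
end

section
/- Let K be a field with a rank-1 valuation w and let K{X} denote the ring of convergent power series Σ a_i X^i with w(a_i) → ∞. If f = Σ f_i X^i ∈ K{X} is invertible in K{X} and f ≠ 0, then w(f_0) < w(f_i) for every i > 0. -/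
open PowerSeries Filter Set

namespace AddRealValuationAux

variable {K : Type*} [Field K]

/-- ultrametric: dominant term -/
theorem w_add_eq_left (v : AddRealValuation K) {x y : K} (h : v.w x < v.w y) :
    v.w (x + y) = v.w x := by
  refine le_antisymm ?_ (le_trans (le_min le_rfl h.le) (v.add_le' x y))
  by_contra hlt
  push_neg at hlt
  have h2 : min (v.w (x + y)) (v.w (-y)) ≤ v.w ((x + y) + -y) := v.add_le' _ _
  rw [add_neg_cancel_right, v.map_neg'] at h2
  exact absurd h2 (not_le.2 (lt_min hlt h))

theorem w_sum_le (v : AddRealValuation K) {ι : Type*} (s : Finset ι) (a : ι → K) (c : EReal)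
    (h : ∀ j ∈ s, c ≤ v.w (a j)) : c ≤ v.w (∑ j ∈ s, a j) := by
  classical
  induction s using Finset.induction with
  | empty => simp [v.map_zero']
  | @insert j s hj ih =>
    rw [Finset.sum_insert hj]
    refine le_trans (le_min (h j (Finset.mem_insert_self _ _)) ?_) (v.add_le' _ _)
    exact ih fun j' hj' => h j' (Finset.mem_insert_of_mem hj')

theorem w_sum_eq (v : AddRealValuation K) {ι : Type*} (s : Finset ι) (a : ι → K) (j0 : ι)
    (hj0 : j0 ∈ s) (hfin : v.w (a j0) < ⊤)
    (h : ∀ j ∈ s, j ≠ j0 → v.w (a j0) < v.w (a j)) :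
    v.w (∑ j ∈ s, a j) = v.w (a j0) := by
  classical
  rw [← Finset.add_sum_erase s a hj0]
  refine w_add_eq_left v ?_
  refine lt_of_lt_of_le ?_ (w_sum_le v _ a ((s.erase j0).inf (fun j => v.w (a j))) ?_)
  · rw [Finset.lt_inf_iff hfin]
    exact fun j hj => h j (Finset.mem_of_mem_erase hj) (Finset.ne_of_mem_erase hj)
  · exact fun j hj => Finset.inf_le hj

/-- existence of the dominant index -/
theorem exists_dom (v : AddRealValuation K) (f : PowerSeries K) (hf0 : f ≠ 0)
    (hconv : v.Conv f) :
    ∃ d : ℕ, (∃ r : ℝ, v.w (PowerSeries.coeff d f) = (r : EReal)) ∧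
      (∀ i, v.w (PowerSeries.coeff d f) ≤ v.w (PowerSeries.coeff i f)) ∧
      (∀ i, d < i → v.w (PowerSeries.coeff d f) < v.w (PowerSeries.coeff i f)) := by
  classical
  obtain ⟨k, hk⟩ : ∃ k, PowerSeries.coeff k f ≠ 0 := by
    by_contra h; push_neg at h; exact hf0 (PowerSeries.ext fun n => by simp [h n])
  obtain ⟨r, hr⟩ := v.finite' _ hk
  obtain ⟨N, hN⟩ := hconv (r + 1)
  set T : Finset ℕ := Finset.range (max N (k + 1)) with hT
  have hkT : k ∈ T := Finset.mem_range.2 (lt_of_lt_of_le (Nat.lt_succ_self k) (le_max_right _ _))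
  have hTne : T.Nonempty := ⟨k, hkT⟩
  obtain ⟨i0, hi0T, hi0⟩ := T.exists_min_image (fun i => v.w (PowerSeries.coeff i f)) hTne
  set A : Finset ℕ := T.filter (fun i => ∀ j ∈ T,
    v.w (PowerSeries.coeff i f) ≤ v.w (PowerSeries.coeff j f)) with hA
  have hAne : A.Nonempty := ⟨i0, Finset.mem_filter.2 ⟨hi0T, hi0⟩⟩
  set d := A.max' hAne with hd
  have hdA : d ∈ A := A.max'_mem hAne
  obtain ⟨hdT, hdmin⟩ := Finset.mem_filter.1 hdA
  have hdr : v.w (PowerSeries.coeff d f) ≤ (r : EReal) := hr ▸ hdmin k hkT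
  have hout : ∀ i, i ∉ T → v.w (PowerSeries.coeff d f) < v.w (PowerSeries.coeff i f) := by
    intro i hi
    have : N ≤ i := by
      by_contra hlt
      exact hi (Finset.mem_range.2 (lt_of_lt_of_le (not_le.1 hlt) (le_max_left _ _)))
    refine lt_of_le_of_lt hdr (lt_of_lt_of_le ?_ (hN i this))
    exact_mod_cast (by linarith : r < r + 1)
  have hmin : ∀ i, v.w (PowerSeries.coeff d f) ≤ v.w (PowerSeries.coeff i f) := by
    intro i
    by_cases hi : i ∈ T
    · exact hdmin i hi
    · exact (hout i hi).le
  refine ⟨d, ?_, hmin, ?_⟩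
  · have hne : PowerSeries.coeff d f ≠ 0 := by
      intro h0
      rw [h0, v.map_zero'] at hdr
      exact absurd hdr (by simp)
    exact v.finite' _ hne
  · intro i hdi
    by_cases hi : i ∈ T
    · refine lt_of_le_of_ne (hmin i) fun heq => ?_
      have hiA : i ∈ A := Finset.mem_filter.2 ⟨hi, fun j hj => heq ▸ hdmin j hj⟩
      exact absurd (A.le_max' i hiA) (not_le.2 hdi)
    · exact hout i hi

end AddRealValuationAux

/-- If `f ∈ K{X}` is a nonzero unit of the ring `K{X}` of convergent
power series over the rank-1 valued field `(K, w)`, then `w f₀ < w fᵢ` for every `i > 0`. -/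
theorem statement5 {K : Type*} [Field K] (v : AddRealValuation K)
    (f : PowerSeries K) (hf0 : f ≠ 0) (hconv : v.Conv f)
    (hunit : ∃ g : PowerSeries K, v.Conv g ∧ f * g = 1) :
    ∀ i : ℕ, 0 < i →
      v.w (PowerSeries.coeff 0 f) < v.w (PowerSeries.coeff i f) := by
  classical
  obtain ⟨g, hgconv, hfg⟩ := hunit
  have hg0 : g ≠ 0 := by
    intro h; rw [h, mul_zero] at hfg; exact one_ne_zero hfg.symm
  obtain ⟨d, ⟨rf, hrf⟩, hfmin, hfstrict⟩ := AddRealValuationAux.exists_dom v f hf0 hconv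
  obtain ⟨e, ⟨rg, hrg⟩, hgmin, hgstrict⟩ := AddRealValuationAux.exists_dom v g hg0 hgconv
  -- the valuation of the coefficient of f*g at d+e is rf+rg
  have key : v.w (PowerSeries.coeff (d + e) (f * g)) =
      v.w (PowerSeries.coeff d f * PowerSeries.coeff e g) := by
    rw [PowerSeries.coeff_mul]
    refine AddRealValuationAux.w_sum_eq v _ _ (d, e) ?_ ?_ ?_
    · exact Finset.HasAntidiagonal.mem_antidiagonal.2 rfl
    · rw [v.map_mul', hrf, hrg, ← EReal.coe_add]
      exact EReal.coe_lt_top _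
    · rintro ⟨i, j⟩ hmem hne
      have hij : i + j = d + e := Finset.HasAntidiagonal.mem_antidiagonal.1 hmem
      rw [v.map_mul', v.map_mul', hrf, hrg]
      have hcase : d < i ∨ e < j := by
        by_contra hc
        push_neg at hc
        have : i = d ∧ j = e := by omega
        exact hne (by simp [this.1, this.2])
      rcases hcase with hi | hj
      · refine EReal.add_lt_add_of_lt_of_le' (hrf ▸ hfstrict i hi) (hrg ▸ hgmin j) ?_ ?_
        · exact ne_bot_of_le_ne_bot (EReal.coe_ne_bot rg) (hrg ▸ hgmin j)
        · intro _ h; exact absurd h (EReal.coe_ne_top rg)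
      · rw [add_comm ((rf : EReal)) ((rg : EReal)),
          add_comm (v.w (PowerSeries.coeff i f))]
        refine EReal.add_lt_add_of_lt_of_le' (hrg ▸ hgstrict j hj) (hrf ▸ hfmin i) ?_ ?_
        · exact ne_bot_of_le_ne_bot (EReal.coe_ne_bot rf) (hrf ▸ hfmin i)
        · intro _ h; exact absurd h (EReal.coe_ne_top rf)
  have hde : d + e = 0 := by
    by_contra hde
    rw [hfg, PowerSeries.coeff_one, if_neg hde, v.map_zero'] at key
    rw [v.map_mul', hrf, hrg, ← EReal.coe_add] at key
    exact EReal.coe_ne_top _ key.symm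
  have hd0 : d = 0 := Nat.eq_zero_of_add_eq_zero_right hde
  intro i hi
  exact hd0 ▸ hfstrict i (hd0 ▸ hi)
end

section
/- Let R be a non-discrete rank-1 valuation ring with maximal ideal 𝔪 and fraction field K, let D = R[[X]] with fraction field F, and suppose D is a generalized Krull domain with defining family of rank-1 valuations ℱ on F. Fix t ∈ 𝔪, t ≠ 0. Then every v ∈ ℱ that is non-trivial on R satisfies v(t) > 0, and consequently only finitely many v ∈ ℱ are non-trivial on R. -/
open PowerSeries Filter Set

/-- Let `R` be a non-discrete rank-1 valuation ring, `D = R[[X]]`,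
`F = Quot(D)`, and suppose `𝓕` is a defining family of rank-1 valuations making `D`
a generalized Krull domain. Fix a nonzero `t` in the maximal ideal `𝔪` of `R`.
Then every `u ∈ 𝓕` which is non-trivial on `R` satisfies `u t > 0`, and only
finitely many `u ∈ 𝓕` are non-trivial on `R`. -/
theorem statement10 {K : Type*} [Field K] (v : AddRealValuation K)
    (hnd : v.Nondiscrete)
    (𝓕 : Set (AddRealValuation (FractionRing (PowerSeries v.subring))))
    (hGK : IsGKFamily (PowerSeries v.subring) (FractionRing (PowerSeries v.subring)) 𝓕)
    (t : v.subring) (ht0 : t ≠ 0) (htm : 0 < v.w (t : K)) :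
    (∀ u ∈ 𝓕,
      (∃ a : v.subring, a ≠ 0 ∧
        u.w (algebraMap (PowerSeries v.subring) (FractionRing (PowerSeries v.subring))
          (PowerSeries.C a)) ≠ 0) →
      0 < u.w (algebraMap (PowerSeries v.subring) (FractionRing (PowerSeries v.subring))
          (PowerSeries.C t))) ∧
    {u ∈ 𝓕 | ∃ a : v.subring, a ≠ 0 ∧
      u.w (algebraMap (PowerSeries v.subring) (FractionRing (PowerSeries v.subring))
        (PowerSeries.C a)) ≠ 0}.Finite := by
  classical
  set D := PowerSeries v.subring with hD
  set F := FractionRing (PowerSeries v.subring) with hF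
  -- every element of D has nonnegative valuation under each u ∈ 𝓕
  have hnonneg : ∀ u ∈ 𝓕, ∀ d : PowerSeries v.subring,
      (0 : EReal) ≤ u.w (algebraMap (PowerSeries v.subring) F d) := by
    intro u hu d
    refine (hGK.1 u hu _).mpr ⟨d, 1, one_ne_zero, ?_, by rw [map_one, mul_one]⟩
    rw [map_one, u.map_one']
    exact lt_irrefl 0
  have key : ∀ u ∈ 𝓕,
      (∃ a : v.subring, a ≠ 0 ∧
        u.w (algebraMap (PowerSeries v.subring) (FractionRing (PowerSeries v.subring))
          (PowerSeries.C a)) ≠ 0) →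
      0 < u.w (algebraMap (PowerSeries v.subring) (FractionRing (PowerSeries v.subring))
          (PowerSeries.C t)) := by
    rintro u hu ⟨a, ha0, hua⟩
    have haK : (a : K) ≠ 0 := by exact_mod_cast ha0
    have hua' : 0 < u.w (algebraMap (PowerSeries v.subring) F (PowerSeries.C a)) :=
      lt_of_le_of_ne (hnonneg u hu _) (Ne.symm hua)
    have ha2 : (0 : EReal) ≤ v.w (a : K) := a.2
    -- v.w a > 0
    have hva : 0 < v.w (a : K) := by
      rcases lt_or_eq_of_le ha2 with h | h
      · exact h
      · exfalso
        have hinv : v.w ((a : K)⁻¹) = 0 := by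
          have h1 := v.map_mul' (a : K) (a : K)⁻¹
          rw [mul_inv_cancel₀ haK, v.map_one', ← h, zero_add] at h1
          exact h1.symm
        have hbmem : ((a : K)⁻¹) ∈ v.subring := hinv.ge
        set b : v.subring := ⟨(a : K)⁻¹, hbmem⟩ with hb
        have hab : a * b = 1 := Subtype.ext (by
          show (a : K) * (a : K)⁻¹ = 1
          exact mul_inv_cancel₀ haK)
        have hsum : u.w (algebraMap (PowerSeries v.subring) F (PowerSeries.C a))
            + u.w (algebraMap (PowerSeries v.subring) F (PowerSeries.C b)) = 0 := by
          rw [← u.map_mul', ← map_mul, ← map_mul, hab, map_one, map_one, u.map_one']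
        have h2 : u.w (algebraMap (PowerSeries v.subring) F (PowerSeries.C a))
            ≤ u.w (algebraMap (PowerSeries v.subring) F (PowerSeries.C a))
              + u.w (algebraMap (PowerSeries v.subring) F (PowerSeries.C b)) :=
          le_add_of_nonneg_right (hnonneg u hu (PowerSeries.C b))
        rw [hsum] at h2
        exact absurd h2 hua'.not_ge
    obtain ⟨ra, hra⟩ := v.finite' _ haK
    obtain ⟨rt, hrt⟩ := v.finite' (t : K) (by exact_mod_cast ht0)
    have hrt0 : 0 < rt := by rw [hrt] at htm; exact_mod_cast htm
    have hra0 : 0 < ra := by rw [hra] at hva; exact_mod_cast hva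
    obtain ⟨n, hn⟩ := exists_nat_ge (ra / rt)
    have hnrt : ra ≤ n * rt := by
      rw [div_le_iff₀ hrt0] at hn; linarith
    have hpow : ∀ m : ℕ, v.w ((t : K) ^ m) = ((m * rt : ℝ) : EReal) := by
      intro m; induction m with
      | zero => simp [v.map_one']
      | succ k ih =>
        rw [pow_succ, v.map_mul', ih, hrt, ← EReal.coe_add]
        congr 1
        push_cast
        ring
    have hainv : v.w ((a : K)⁻¹) = ((-ra : ℝ) : EReal) := by
      obtain ⟨s, hs⟩ := v.finite' ((a : K)⁻¹) (inv_ne_zero haK)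
      have h1 := v.map_mul' (a : K) (a : K)⁻¹
      rw [mul_inv_cancel₀ haK, v.map_one', hra, hs, ← EReal.coe_add] at h1
      have h2 : ra + s = 0 := by exact_mod_cast h1.symm
      rw [hs]
      congr 1
      linarith
    have hc : (0 : EReal) ≤ v.w ((t : K) ^ n * (a : K)⁻¹) := by
      rw [v.map_mul', hpow, hainv, ← EReal.coe_add]
      exact_mod_cast (by linarith : (0 : ℝ) ≤ n * rt + -ra)
    set cb : v.subring := ⟨(t : K) ^ n * (a : K)⁻¹, hc⟩ with hcb
    have htn : t ^ n = a * cb := Subtype.ext (by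
      show ((t ^ n : v.subring) : K) = (a : K) * ((t : K) ^ n * (a : K)⁻¹)
      push_cast
      rw [mul_comm ((t : K) ^ n) ((a : K)⁻¹), ← mul_assoc, mul_inv_cancel₀ haK, one_mul])
    by_contra hle
    have hut0 : u.w (algebraMap (PowerSeries v.subring) F (PowerSeries.C t)) = 0 :=
      le_antisymm (not_lt.mp hle) (hnonneg u hu _)
    have hpowu : ∀ m : ℕ,
        u.w (algebraMap (PowerSeries v.subring) F (PowerSeries.C t) ^ m) = 0 := by
      intro m; induction m with
      | zero => simpa using u.map_one'
      | succ k ih => rw [pow_succ, u.map_mul', ih, hut0, add_zero]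
    have heq : (PowerSeries.C t) ^ n
        = (PowerSeries.C a) * (PowerSeries.C cb) := by
      rw [← map_pow, ← map_mul, htn]
    have h0 : u.w (algebraMap (PowerSeries v.subring) F (PowerSeries.C a))
        + u.w (algebraMap (PowerSeries v.subring) F (PowerSeries.C cb)) = 0 := by
      rw [← u.map_mul', ← map_mul, ← heq, map_pow, hpowu n]
    have h2 : u.w (algebraMap (PowerSeries v.subring) F (PowerSeries.C a))
        ≤ u.w (algebraMap (PowerSeries v.subring) F (PowerSeries.C a))
          + u.w (algebraMap (PowerSeries v.subring) F (PowerSeries.C cb)) :=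
      le_add_of_nonneg_right (hnonneg u hu (PowerSeries.C cb))
    rw [h0] at h2
    exact absurd h2 hua'.not_ge
  refine ⟨key, ?_⟩
  have hCt : (PowerSeries.C t) ≠ (0 : PowerSeries v.subring) := fun h =>
    ht0 (by simpa using congrArg (PowerSeries.coeff 0) h)
  refine (hGK.2.2 _ hCt).subset ?_
  rintro u ⟨hu, a, ha0, hua⟩
  exact ⟨hu, (key u hu ⟨a, ha0, hua⟩).ne'⟩
end

section
/- Let K be a field complete with respect to a non-discrete rank-1 valuation w, and let R be its valuation ring. Then the formal power series ring R[[X]] is not a generalized Krull domain: there is no family ℱ of rank-1 valuations of Quot(R[[X]]) satisfying the generalized Krull conditions for R[[X]]. -/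
open PowerSeries Filter Set

namespace AddRealValuation

variable {K : Type*} [Field K] (v : AddRealValuation K)

lemma w_ne_bot (x : K) : v.w x ≠ ⊥ := by
  rcases eq_or_ne x 0 with h | h
  · rw [h, v.map_zero']; exact top_ne_bot
  · obtain ⟨r, hr⟩ := v.finite' x h
    rw [hr]; exact EReal.coe_ne_bot r

lemma w_top_iff {x : K} : v.w x = ⊤ ↔ x = 0 := by
  constructor
  · intro h
    by_contra hx
    obtain ⟨r, hr⟩ := v.finite' x hx
    rw [hr] at h; exact EReal.coe_ne_top r h
  · intro h; rw [h, v.map_zero']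

lemma w_sub_ge (x y : K) : min (v.w x) (v.w y) ≤ v.w (x - y) := by
  rw [sub_eq_add_neg]
  calc min (v.w x) (v.w y) = min (v.w x) (v.w (-y)) := by rw [v.map_neg']
  _ ≤ v.w (x + -y) := v.add_le' _ _

lemma w_sub_eq {x y : K} (h : v.w y < v.w x) : v.w (x - y) = v.w y := by
  rw [sub_eq_add_neg, add_comm]
  have : v.w (-y) = v.w y := v.map_neg' y
  rw [← this] at h ⊢
  exact v.w_add_eq h

lemma w_pow {x : K} {r : ℝ} (h : v.w x = (r : EReal)) (k : ℕ) :
    v.w (x ^ k) = ((k * r : ℝ) : EReal) := by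
  induction k with
  | zero => simp [v.map_one']
  | succ n ih =>
      rw [pow_succ, v.map_mul', ih, h, ← EReal.coe_add]
      congr 1
      push_cast
      ring

lemma w_inv {x : K} {r : ℝ} (h : v.w x = (r : EReal)) : v.w x⁻¹ = ((-r : ℝ) : EReal) := by
  have hx : x ≠ 0 := by
    intro h0; rw [h0, v.map_zero'] at h; exact EReal.coe_ne_top r h.symm
  have h1 : v.w (x * x⁻¹) = 0 := by rw [mul_inv_cancel₀ hx, v.map_one']
  rw [v.map_mul', h] at h1
  obtain ⟨s, hs⟩ := v.finite' x⁻¹ (inv_ne_zero hx)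
  rw [hs] at h1 ⊢
  rw [← EReal.coe_add] at h1
  have : r + s = 0 := by exact_mod_cast h1
  congr 1; linarith


def TendstoV (a : ℕ → K) (L : K) : Prop :=
  ∀ M : ℝ, ∃ N : ℕ, ∀ n ≥ N, (M : EReal) ≤ v.w (a n - L)

variable {v}

lemma w_eq_top {x : K} (h : ∀ M : ℝ, (M : EReal) ≤ v.w x) : x = 0 := by
  rcases eq_or_ne x 0 with h0 | h0
  · exact h0
  · obtain ⟨r, hr⟩ := v.finite' x h0
    have := h (r + 1)
    rw [hr] at this
    exfalso
    have : (r : ℝ) + 1 ≤ r := by exact_mod_cast this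
    linarith

lemma TendstoV.unique {a : ℕ → K} {L L' : K} (h : v.TendstoV a L) (h' : v.TendstoV a L') :
    L = L' := by
  have : ∀ M : ℝ, (M : EReal) ≤ v.w (L - L') := by
    intro M
    obtain ⟨N, hN⟩ := h M
    obtain ⟨N', hN'⟩ := h' M
    have h1 := hN (max N N') (le_max_left _ _)
    have h2 := hN' (max N N') (le_max_right _ _)
    have : L - L' = (a (max N N') - L') - (a (max N N') - L) := by ring
    rw [this]
    calc (M : EReal) ≤ min (v.w (a (max N N') - L')) (v.w (a (max N N') - L)) :=
          le_min h2 h1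
    _ ≤ _ := v.w_sub_ge _ _
  exact sub_eq_zero.mp (w_eq_top this)

lemma TendstoV.const (c : K) : v.TendstoV (fun _ => c) c := by
  intro M; exact ⟨0, fun n _ => by simp [v.map_zero']⟩

lemma TendstoV.add {a b : ℕ → K} {L L' : K} (ha : v.TendstoV a L) (hb : v.TendstoV b L') :
    v.TendstoV (fun n => a n + b n) (L + L') := by
  intro M
  obtain ⟨N, hN⟩ := ha M
  obtain ⟨N', hN'⟩ := hb M
  refine ⟨max N N', fun n hn => ?_⟩
  have h1 := hN n (le_trans (le_max_left _ _) hn)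
  have h2 := hN' n (le_trans (le_max_right _ _) hn)
  have : a n + b n - (L + L') = (a n - L) + (b n - L') := by ring
  rw [this]
  exact le_trans (le_min h1 h2) (v.add_le' _ _)

lemma TendstoV.neg {a : ℕ → K} {L : K} (ha : v.TendstoV a L) :
    v.TendstoV (fun n => -(a n)) (-L) := by
  intro M
  obtain ⟨N, hN⟩ := ha M
  refine ⟨N, fun n hn => ?_⟩
  have : -(a n) - (-L) = -(a n - L) := by ring
  rw [this, v.map_neg']
  exact hN n hn

lemma TendstoV.sub {a b : ℕ → K} {L L' : K} (ha : v.TendstoV a L) (hb : v.TendstoV b L') :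
    v.TendstoV (fun n => a n - b n) (L - L') := by
  have := ha.add hb.neg
  simpa [sub_eq_add_neg] using this

lemma TendstoV.mul_left {a : ℕ → K} {L : K} (c : K) (ha : v.TendstoV a L) :
    v.TendstoV (fun n => c * a n) (c * L) := by
  rcases eq_or_ne c 0 with rfl | hc
  · intro M; exact ⟨0, fun n _ => by simp [v.map_zero']⟩
  · obtain ⟨r, hr⟩ := v.finite' c hc
    intro M
    obtain ⟨N, hN⟩ := ha (M - r)
    refine ⟨N, fun n hn => ?_⟩
    have : c * a n - c * L = c * (a n - L) := by ring
    rw [this, v.map_mul', hr]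
    have := hN n hn
    calc (M : EReal) = (r : EReal) + ((M - r : ℝ) : EReal) := by
          rw [← EReal.coe_add]; norm_num
    _ ≤ (r : EReal) + v.w (a n - L) := by
          exact add_le_add_right this _
    _ = _ := rfl

lemma TendstoV.w_ge {a : ℕ → K} {L : K} {B : EReal} (ha : v.TendstoV a L)
    (h : ∀ n, B ≤ v.w (a n)) : B ≤ v.w L := by
  by_contra hlt
  push_neg at hlt
  obtain ⟨z, hz1, hz2⟩ := exists_between hlt
  obtain ⟨r, hr1, hr2⟩ := EReal.exists_between_coe_real hz1
  obtain ⟨N, hN⟩ := ha r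
  have h1 : (r : EReal) ≤ v.w (a N - L) := hN N le_rfl
  have h2 : (r : EReal) < v.w (a N) := lt_of_lt_of_le (lt_of_lt_of_le hr2 hz2.le) (h N)
  have : L = a N - (a N - L) := by ring
  rw [this] at hr1
  have h3 : min (v.w (a N)) (v.w (a N - L)) ≤ v.w (a N - (a N - L)) := v.w_sub_ge _ _
  have h4 : (r : EReal) ≤ min (v.w (a N)) (v.w (a N - L)) := le_min h2.le h1
  exact absurd (le_trans h4 h3) (not_le.mpr hr1)

lemma TendstoV.shift {a : ℕ → K} {L : K} (k : ℕ) (ha : v.TendstoV a L) :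
    v.TendstoV (fun n => a (n + k)) L := by
  intro M
  obtain ⟨N, hN⟩ := ha M
  exact ⟨N, fun n hn => hN (n + k) (le_trans hn (Nat.le_add_right _ _))⟩


lemma TendstoV.unshift {a : ℕ → K} {L : K} (ha : v.TendstoV (fun n => a (n + 1)) L) :
    v.TendstoV a L := by
  intro M
  obtain ⟨N, hN⟩ := ha M
  refine ⟨N + 1, fun n hn => ?_⟩
  obtain ⟨m, rfl⟩ : ∃ m, n = m + 1 := ⟨n - 1, by omega⟩
  exact hN m (by omega)

/-! ### Evaluation of power series -/

section Eval

open PowerSeries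

lemma w_sum_ge {ι : Type*} {s : Finset ι} {g : ι → K} {B : EReal}
    (h : ∀ i ∈ s, B ≤ v.w (g i)) : B ≤ v.w (∑ i ∈ s, g i) := by
  classical
  induction s using Finset.induction_on with
  | empty => simp [v.map_zero']
  | @insert a s ha ih =>
    rw [Finset.sum_insert ha]
    refine le_trans (le_min (h a (Finset.mem_insert_self a s))
      (ih fun i hi => h i (Finset.mem_insert_of_mem hi))) (v.add_le' _ _)

lemma w_coe_nonneg (x : v.subring) : 0 ≤ v.w (x : K) := x.2

/-- `c` has a positive real valuation. -/
def VPos (v : AddRealValuation K) (c : K) : Prop := ∃ θ : ℝ, 0 < θ ∧ v.w c = (θ : EReal)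

noncomputable def psum (f : PowerSeries v.subring) (c : K) (N : ℕ) : K :=
  ∑ i ∈ Finset.range N, ((PowerSeries.coeff i f : v.subring) : K) * c ^ i

lemma w_term_ge {c : K} {θ : ℝ} (hc : v.w c = (θ : EReal)) (x : v.subring) (i : ℕ) :
    ((i * θ : ℝ) : EReal) ≤ v.w ((x : K) * c ^ i) := by
  rw [v.map_mul', v.w_pow hc]
  calc ((i * θ : ℝ) : EReal) = 0 + ((i * θ : ℝ) : EReal) := by rw [zero_add]
  _ ≤ v.w (x : K) + ((i * θ : ℝ) : EReal) := add_le_add_left (w_coe_nonneg x) _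

lemma w_term_ge' {c : K} {θ : ℝ} (hc : v.w c = (θ : EReal)) (hθ : 0 ≤ θ)
    (x : v.subring) {m i : ℕ} (hi : m ≤ i) :
    ((m * θ : ℝ) : EReal) ≤ v.w ((x : K) * c ^ i) := by
  refine le_trans ?_ (w_term_ge hc x i)
  exact_mod_cast mul_le_mul_of_nonneg_right (by exact_mod_cast hi) hθ

lemma psum_sub {f : PowerSeries v.subring} {c : K} {m n : ℕ} (h : m ≤ n) :
    psum f c n - psum f c m
      = ∑ i ∈ Finset.Ico m n, ((PowerSeries.coeff i f : v.subring) : K) * c ^ i := by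
  rw [psum, psum, ← Finset.sum_Ico_eq_sub _ h]

lemma w_psum_sub_ge {f : PowerSeries v.subring} {c : K} {θ : ℝ}
    (hc : v.w c = (θ : EReal)) (hθ : 0 ≤ θ) {N m n : ℕ} (hm : N ≤ m) (hn : N ≤ n) :
    ((N * θ : ℝ) : EReal) ≤ v.w (psum f c m - psum f c n) := by
  rcases le_total n m with h | h
  · rw [psum_sub h]
    exact w_sum_ge fun i hi => w_term_ge' hc hθ _ (le_trans hn (Finset.mem_Ico.mp hi).1)
  · have : psum f c m - psum f c n = -(psum f c n - psum f c m) := by ring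
    rw [this, v.map_neg', psum_sub h]
    exact w_sum_ge fun i hi => w_term_ge' hc hθ _ (le_trans hm (Finset.mem_Ico.mp hi).1)

lemma ev_exists (hcomp : v.IsComplete) (f : PowerSeries v.subring) {c : K}
    (hc : VPos v c) : ∃ L, v.TendstoV (psum f c) L := by
  obtain ⟨θ, hθ, hcθ⟩ := hc
  apply hcomp
  intro M
  obtain ⟨N, hN⟩ := exists_nat_ge (M / θ)
  refine ⟨N, fun m hm n hn => ?_⟩
  refine le_trans ?_ (w_psum_sub_ge hcθ hθ.le hm hn)
  have : M ≤ N * θ := by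
    rw [div_le_iff₀ hθ] at hN
    linarith
  exact_mod_cast this

noncomputable def ev (hcomp : v.IsComplete) (f : PowerSeries v.subring) {c : K}
    (hc : VPos v c) : K := (ev_exists hcomp f hc).choose

lemma ev_spec (hcomp : v.IsComplete) (f : PowerSeries v.subring) {c : K}
    (hc : VPos v c) : v.TendstoV (psum f c) (ev hcomp f hc) :=
  (ev_exists hcomp f hc).choose_spec

lemma ev_w_ge (hcomp : v.IsComplete) {f : PowerSeries v.subring} {c : K}
    (hc : VPos v c) {B : EReal}
    (h : ∀ i : ℕ, B ≤ v.w (((PowerSeries.coeff i f : v.subring) : K) * c ^ i)) :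
    B ≤ v.w (ev hcomp f hc) :=
  (ev_spec hcomp f hc).w_ge fun n => w_sum_ge fun i _ => h i

lemma ev_mem (hcomp : v.IsComplete) (f : PowerSeries v.subring) {c : K}
    (hc : VPos v c) : 0 ≤ v.w (ev hcomp f hc) := by
  obtain ⟨θ, hθ, hcθ⟩ := hc
  refine ev_w_ge hcomp _ fun i => ?_
  refine le_trans ?_ (w_term_ge hcθ _ i)
  have : (0:ℝ) ≤ i * θ := by positivity
  exact_mod_cast this


lemma psum_add (f g : PowerSeries v.subring) (c : K) (N : ℕ) :
    psum (f + g) c N = psum f c N + psum g c N := by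
  rw [psum, psum, psum, ← Finset.sum_add_distrib]
  refine Finset.sum_congr rfl fun i _ => ?_
  rw [map_add]
  push_cast
  ring

lemma ev_add (hcomp : v.IsComplete) (f g : PowerSeries v.subring) {c : K}
    (hc : VPos v c) :
    ev hcomp (f + g) hc = ev hcomp f hc + ev hcomp g hc := by
  refine TendstoV.unique (ev_spec hcomp (f+g) hc) ?_
  have heq : psum (f + g) c = fun n => psum f c n + psum g c n :=
    funext fun n => psum_add f g c n
  rw [heq]
  exact (ev_spec hcomp f hc).add (ev_spec hcomp g hc)

lemma psum_C_mul (r : v.subring) (g : PowerSeries v.subring) (c : K) (N : ℕ) :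
    psum (PowerSeries.C r * g) c N = (r : K) * psum g c N := by
  rw [psum, psum, Finset.mul_sum]
  refine Finset.sum_congr rfl fun i _ => ?_
  rw [PowerSeries.coeff_C_mul]
  push_cast
  ring

lemma ev_C (hcomp : v.IsComplete) (r : v.subring) {c : K} (hc : VPos v c) :
    ev hcomp (PowerSeries.C r) hc = (r : K) := by
  refine TendstoV.unique (ev_spec hcomp _ hc) ?_
  apply TendstoV.unshift
  have heq : ∀ N : ℕ, psum (PowerSeries.C r) c (N + 1) = (r : K) := by
    intro N
    rw [psum]
    rw [Finset.sum_eq_single 0]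
    · simp
    · intro b _ hb
      rw [PowerSeries.coeff_C]
      simp [hb]
    · intro h; exact absurd (Finset.mem_range.mpr (Nat.succ_pos N)) h
  have : (fun N => psum (PowerSeries.C r) c (N + 1)) = fun _ => (r : K) := by
    funext N; exact heq N
  rw [this]
  exact TendstoV.const _

/-- Shift of a power series: drop the first `k` coefficients. -/
noncomputable def shf (f : PowerSeries v.subring) (k : ℕ) : PowerSeries v.subring :=
  PowerSeries.mk fun t => PowerSeries.coeff (t + k) f

lemma shf_shf (f : PowerSeries v.subring) (k : ℕ) : shf (shf f k) 1 = shf f (k + 1) := by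
  have harith : ∀ t : ℕ, t + 1 + k = t + (k + 1) := fun t => by omega
  ext t
  simp [shf, PowerSeries.coeff_mk, harith]

lemma psum_succ_eq (f : PowerSeries v.subring) (c : K) (N : ℕ) :
    psum f c (N + 1) = ((PowerSeries.coeff 0 f : v.subring) : K)
      + c * psum (shf f 1) c N := by
  unfold psum
  rw [Finset.sum_range_succ', Finset.mul_sum]
  simp only [shf, PowerSeries.coeff_mk, pow_zero, mul_one]
  rw [add_comm]
  congr 1
  refine Finset.sum_congr rfl fun i _ => ?_
  rw [pow_succ]
  ring

lemma ev_shift (hcomp : v.IsComplete) (f : PowerSeries v.subring) {c : K} (hc : VPos v c) :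
    ev hcomp f hc = ((PowerSeries.coeff 0 f : v.subring) : K)
      + c * ev hcomp (shf f 1) hc := by
  have h1 : v.TendstoV (fun N => psum f c (N + 1)) (ev hcomp f hc) :=
    (ev_spec hcomp f hc).shift 1
  have h2 : v.TendstoV (fun N => psum f c (N + 1))
      (((PowerSeries.coeff 0 f : v.subring) : K) + c * ev hcomp (shf f 1) hc) := by
    have := (TendstoV.const (v := v) ((PowerSeries.coeff 0 f : v.subring) : K)).add
      ((ev_spec hcomp (shf f 1) hc).mul_left c)
    simpa [psum_succ_eq] using this
  exact h1.unique h2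

/-! ### Telescoping for products with `X - C a` -/

lemma coeff_zero_X_sub_C_mul (a : v.subring) (h : PowerSeries v.subring) :
    PowerSeries.coeff 0 ((PowerSeries.X - PowerSeries.C a) * h)
      = -(a * PowerSeries.coeff 0 h) := by
  rw [sub_mul, map_sub, PowerSeries.coeff_zero_X_mul, PowerSeries.coeff_C_mul]
  ring

lemma coeff_succ_X_sub_C_mul (a : v.subring) (h : PowerSeries v.subring) (i : ℕ) :
    PowerSeries.coeff (i + 1) ((PowerSeries.X - PowerSeries.C a) * h)
      = PowerSeries.coeff i h - a * PowerSeries.coeff (i + 1) h := by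
  rw [sub_mul, map_sub, PowerSeries.coeff_succ_X_mul, PowerSeries.coeff_C_mul]

lemma psum_X_sub_C_mul (a : v.subring) (h : PowerSeries v.subring) (N : ℕ) :
    psum ((PowerSeries.X - PowerSeries.C a) * h) (↑a) (N + 1)
      = -((PowerSeries.coeff N h : v.subring) : K) * (↑a : K) ^ (N + 1) := by
  induction N with
  | zero =>
    rw [psum, Finset.sum_range_one, coeff_zero_X_sub_C_mul]
    push_cast
    ring
  | succ N ih =>
    rw [psum, Finset.sum_range_succ, ← psum, ih, coeff_succ_X_sub_C_mul]
    push_cast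
    ring

lemma ev_X_sub_C_mul (hcomp : v.IsComplete) (a : v.subring) (h : PowerSeries v.subring)
    (ha : VPos v (↑a : K)) :
    ev hcomp ((PowerSeries.X - PowerSeries.C a) * h) ha = 0 := by
  obtain ⟨θ, hθ, haθ⟩ := ha
  refine TendstoV.unique ((ev_spec hcomp _ _).shift 1) ?_
  intro M
  obtain ⟨N, hN⟩ := exists_nat_ge (M / θ)
  refine ⟨N, fun n hn => ?_⟩
  show (M : EReal) ≤ v.w (psum ((PowerSeries.X - PowerSeries.C a) * h) (↑a) (n+1) - 0)
  rw [psum_X_sub_C_mul, sub_zero]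
  have h1 : ((((n:ℝ) + 1) * θ : ℝ) : EReal)
      ≤ v.w (-((PowerSeries.coeff n h : v.subring) : K) * (↑a : K) ^ (n + 1)) := by
    have := w_term_ge (v := v) haθ (-(PowerSeries.coeff n h)) (n + 1)
    push_cast at this ⊢
    convert this using 2
  refine le_trans ?_ h1
  have : M ≤ ((n:ℝ) + 1) * θ := by
    rw [div_le_iff₀ hθ] at hN
    have : (N : ℝ) ≤ (n : ℝ) + 1 := by exact_mod_cast Nat.le_succ_of_le hn
    nlinarith
  exact_mod_cast this

/-! ### Division by `X - C a` -/

lemma eq_X_sub_C_mul_of_ev_eq_zero (hcomp : v.IsComplete) {a : v.subring} {f : PowerSeries v.subring}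
    (ha : VPos v (↑a : K)) (h0 : ev hcomp f ha = 0) :
    ∃ h : PowerSeries v.subring, f = (PowerSeries.X - PowerSeries.C a) * h := by
  refine ⟨PowerSeries.mk fun i => ⟨ev hcomp (shf f (i + 1)) ha, ev_mem hcomp _ ha⟩, ?_⟩
  have key : ∀ i : ℕ, ev hcomp (shf f i) ha
      = ((PowerSeries.coeff i f : v.subring) : K) + (↑a : K) * ev hcomp (shf f (i + 1)) ha := by
    intro i
    rw [ev_shift hcomp (shf f i) ha, shf_shf]
    norm_num [shf, PowerSeries.coeff_mk]
  have key0 : ev hcomp (shf f 0) ha = ev hcomp f ha := by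
    congr 1
    ext t
    simp [shf, PowerSeries.coeff_mk]
  ext i
  cases i with
  | zero =>
    rw [coeff_zero_X_sub_C_mul]
    have := key 0
    rw [key0, h0] at this
    have h2 : ((PowerSeries.coeff 0 f : v.subring) : K)
        = -((↑a : K) * ev hcomp (shf f (0 + 1)) ha) := by
      rw [eq_neg_iff_add_eq_zero]
      linear_combination -this
    simp only [PowerSeries.coeff_mk]
    push_cast
    rw [h2]
  | succ i =>
    rw [coeff_succ_X_sub_C_mul]
    simp only [PowerSeries.coeff_mk]
    push_cast
    linear_combination -(key (i + 1))


lemma X_sub_C_dvd_iff (hcomp : v.IsComplete) {a : v.subring} {f : PowerSeries v.subring}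
    (ha : VPos v (↑a : K)) :
    (PowerSeries.X - PowerSeries.C a) ∣ f ↔ ev hcomp f ha = 0 := by
  constructor
  · rintro ⟨h, rfl⟩
    exact ev_X_sub_C_mul hcomp a h ha
  · intro h0
    obtain ⟨h, hh⟩ := eq_X_sub_C_mul_of_ev_eq_zero hcomp ha h0
    exact ⟨h, hh⟩

lemma w_pos_ne_zero {c : K} (hc : VPos v c) : c ≠ 0 := by
  obtain ⟨θ, _, hθ⟩ := hc
  intro h
  rw [h, v.map_zero'] at hθ
  exact EReal.coe_ne_top θ hθ.symm

lemma not_isUnit_X_sub_C {a : v.subring} (ha : VPos v (↑a : K)) :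
    ¬ IsUnit (PowerSeries.X - PowerSeries.C a) := by
  intro h
  have h2 := PowerSeries.isUnit_constantCoeff _ h
  rw [map_sub, PowerSeries.constantCoeff_X, PowerSeries.constantCoeff_C, zero_sub] at h2
  obtain ⟨u, hu⟩ := h2.neg
  obtain ⟨θ, hθ, haθ⟩ := ha
  have h3 : (↑(u.val * u.inv) : K) = 1 := by rw [u.val_inv]; rfl
  have h4 : v.w ((u.val : K) * (u.inv : K)) = 0 := by
    push_cast at h3
    rw [h3, v.map_one']
  rw [v.map_mul'] at h4
  have h5 : v.w (u.val : K) = v.w (↑a : K) := by rw [hu, neg_neg]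
  rw [h5, haθ] at h4
  have h6 := w_coe_nonneg (v := v) u.inv
  -- θ + w(u.inv) = 0 with θ > 0 and w(u.inv) ≥ 0 : contradiction
  have h7 : (0:EReal) < (θ : EReal) := by exact_mod_cast hθ
  have : (0:EReal) < (θ : EReal) + v.w (u.inv : K) :=
    lt_of_lt_of_le h7 (le_add_of_nonneg_right h6)
  rw [h4] at this
  exact lt_irrefl _ this

lemma X_sub_C_ne_zero {a : v.subring} : (PowerSeries.X - PowerSeries.C a) ≠ 0 := by
  intro h
  have := congrArg (PowerSeries.coeff 1) h
  rw [map_sub, PowerSeries.coeff_one_X, PowerSeries.coeff_C, map_zero] at this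
  simp at this

lemma prime_X_sub_C (hcomp : v.IsComplete) {a : v.subring} (ha : VPos v (↑a : K)) :
    Prime (PowerSeries.X - PowerSeries.C a) := by
  refine ⟨X_sub_C_ne_zero, not_isUnit_X_sub_C ha, ?_⟩
  intro f g hdvd
  by_cases hf : ev hcomp f ha = 0
  · exact Or.inl ((X_sub_C_dvd_iff hcomp ha).mpr hf)
  · right
    rw [X_sub_C_dvd_iff hcomp ha]
    -- r := ev f ≠ 0 ; f = (X - C a) q + C r
    set r : K := ev hcomp f ha with hr
    have hrmem : 0 ≤ v.w r := ev_mem hcomp f ha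
    set rr : v.subring := ⟨r, hrmem⟩ with hrr
    have hfr : ev hcomp (f - PowerSeries.C rr) ha = 0 := by
      have : f - PowerSeries.C rr + PowerSeries.C rr = f := by ring
      have h2 := ev_add hcomp (f - PowerSeries.C rr) (PowerSeries.C rr) ha
      rw [this, ev_C] at h2
      have : (rr : K) = r := rfl
      rw [this] at h2
      -- h2 : ev f = ev (f - C rr) + r
      linear_combination -h2 - hr
    obtain ⟨q, hq⟩ := eq_X_sub_C_mul_of_ev_eq_zero hcomp ha hfr
    obtain ⟨k, hk⟩ := hdvd
    -- C rr * g = (X - C a) * (k - q * g)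
    have hcg : PowerSeries.C rr * g
        = (PowerSeries.X - PowerSeries.C a) * (k - q * g) := by
      have hf2 : f = (PowerSeries.X - PowerSeries.C a) * q
          + PowerSeries.C rr := by
        linear_combination hq
      calc PowerSeries.C rr * g
          = f * g - (PowerSeries.X - PowerSeries.C a) * q * g := by
            rw [hf2]; ring
        _ = (PowerSeries.X - PowerSeries.C a) * (k - q * g) := by
            rw [hk]; ring
    -- evaluate partial sums
    obtain ⟨θ, hθ, haθ⟩ := ha
    have hrne : r ≠ 0 := hf
    obtain ⟨ρ, hρ⟩ := v.finite' r hrne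
    refine TendstoV.unique (ev_spec hcomp g _) ?_
    apply TendstoV.unshift
    intro M
    obtain ⟨N, hN⟩ := exists_nat_ge ((M + ρ) / θ)
    refine ⟨N, fun n hn => ?_⟩
    have hps : r * psum g (↑a : K) (n+1)
        = -((PowerSeries.coeff n (k - q * g) : v.subring) : K) * (↑a : K)^(n+1) := by
      have h3 := psum_X_sub_C_mul (v := v) a (k - q * g) n
      rw [← hcg] at h3
      rw [← h3, psum_C_mul]
    have hw : ((((n:ℝ)+1) * θ : ℝ) : EReal) ≤ v.w (r * psum g (↑a : K) (n+1)) := by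
      rw [hps]
      have := w_term_ge (v := v) haθ (-(PowerSeries.coeff n (k - q*g))) (n+1)
      push_cast at this ⊢
      convert this using 2
    rw [v.map_mul', hρ] at hw
    have hw2 : ((((n:ℝ)+1) * θ - ρ : ℝ) : EReal) ≤ v.w (psum g (↑a : K) (n+1)) := by
      rcases eq_or_ne (psum g (↑a : K) (n+1)) 0 with h0 | h0
      · rw [h0, v.map_zero']; exact le_top
      · obtain ⟨s, hs⟩ := v.finite' _ h0
        rw [hs] at hw ⊢
        rw [← EReal.coe_add] at hw
        have h9 : ((n:ℝ)+1) * θ ≤ ρ + s := by exact_mod_cast hw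
        have h10 : ((n:ℝ)+1) * θ - ρ ≤ s := by linarith
        exact_mod_cast h10
    show (M : EReal) ≤ v.w (psum g (↑a : K) (n+1) - 0)
    rw [sub_zero]
    refine le_trans ?_ hw2
    have hNn : (N : ℝ) ≤ (n : ℝ) := by exact_mod_cast hn
    rw [div_le_iff₀ hθ] at hN
    have : M ≤ ((n:ℝ)+1) * θ - ρ := by nlinarith
    exact_mod_cast this

end Eval

/-! ### Choice of a sequence of elements with rapidly decreasing valuations -/

section Seq

lemma nd_step (hnd : v.Nondiscrete) (β : ℝ) (hβ : 0 < β) :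
    ∃ p : K × ℝ, (0 < p.2 ∧ v.w p.1 = (p.2 : EReal)) ∧ p.2 ≤ β / 2 := by
  obtain ⟨x, hx1, hx2⟩ := hnd (β/2) (by positivity)
  have hxne : x ≠ 0 := by
    intro h; rw [h, v.map_zero'] at hx2; exact not_top_lt hx2
  obtain ⟨r, hr⟩ := v.finite' x hxne
  refine ⟨(x, r), ⟨?_, hr⟩, ?_⟩
  · rw [hr] at hx1; exact_mod_cast hx1
  · rw [hr] at hx2; exact_mod_cast le_of_lt hx2

variable (hnd : v.Nondiscrete)

noncomputable def ndSeq : ℕ → {p : K × ℝ // 0 < p.2 ∧ v.w p.1 = (p.2 : EReal)}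
  | 0 => ⟨(nd_step hnd 2 (by norm_num)).choose, (nd_step hnd 2 (by norm_num)).choose_spec.1⟩
  | (n+1) =>
      ⟨(nd_step hnd (ndSeq n).1.2 (ndSeq n).2.1).choose,
       (nd_step hnd (ndSeq n).1.2 (ndSeq n).2.1).choose_spec.1⟩

noncomputable def eps (i : ℕ) : ℝ := (ndSeq hnd i).1.2

noncomputable def sel (i : ℕ) : K := (ndSeq hnd i).1.1

lemma eps_pos (i : ℕ) : 0 < eps hnd i := (ndSeq hnd i).2.1

lemma w_sel (i : ℕ) : v.w (sel hnd i) = ((eps hnd i : ℝ) : EReal) := (ndSeq hnd i).2.2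

lemma eps_succ_le (i : ℕ) : eps hnd (i+1) ≤ eps hnd i / 2 :=
  (nd_step hnd (ndSeq hnd i).1.2 (ndSeq hnd i).2.1).choose_spec.2

lemma eps_succ_lt (i : ℕ) : eps hnd (i+1) < eps hnd i :=
  lt_of_le_of_lt (eps_succ_le hnd i) (half_lt_self (eps_pos hnd i))

lemma eps_le_of_le {i j : ℕ} (h : i ≤ j) : eps hnd j ≤ eps hnd i := by
  induction j, h using Nat.le_induction with
  | base => exact le_refl _
  | succ j hij ih => exact le_trans (eps_succ_lt hnd j).le ih

/-- The valuations of the coefficients of our power series. -/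
noncomputable def vb : ℕ → ℝ
  | 0 => 2 * eps hnd 0
  | (k+1) => vb k - eps hnd (k+1)

lemma vb_ge (k : ℕ) : eps hnd 0 + eps hnd k ≤ vb hnd k := by
  induction k with
  | zero => show _ ≤ 2 * eps hnd 0; linarith [eps_pos hnd 0]
  | succ k ih =>
      have h1 := eps_succ_le hnd k
      have h2 := eps_pos hnd (k+1)
      show eps hnd 0 + eps hnd (k+1) ≤ vb hnd k - eps hnd (k+1)
      linarith

lemma vb_pos (k : ℕ) : 0 < vb hnd k :=
  lt_of_lt_of_le (add_pos (eps_pos hnd 0) (eps_pos hnd k)) (vb_ge hnd k)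

lemma vb_succ (k : ℕ) : vb hnd (k+1) = vb hnd k - eps hnd (k+1) := rfl

lemma w_div {x y : K} {r s : ℝ} (hx : v.w x = (r : EReal)) (hy : v.w y = (s : EReal)) :
    v.w (x / y) = ((r - s : ℝ) : EReal) := by
  have hyne : y ≠ 0 := by
    intro h; rw [h, v.map_zero'] at hy; exact EReal.coe_ne_top s hy.symm
  rw [div_eq_mul_inv, v.map_mul', hx, w_inv (v := v) hy, ← EReal.coe_add]
  congr 1

/-- The coefficients of our power series. -/
noncomputable def bel : ℕ → K
  | 0 => sel hnd 0 * sel hnd 0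
  | (k+1) => bel k / sel hnd (k+1)

lemma w_bel (k : ℕ) : v.w (bel hnd k) = ((vb hnd k : ℝ) : EReal) := by
  induction k with
  | zero =>
      show v.w (sel hnd 0 * sel hnd 0) = _
      rw [v.map_mul', w_sel, ← EReal.coe_add]
      rw [show vb hnd 0 = 2 * eps hnd 0 from rfl]
      congr 1
      ring
  | succ k ih =>
      show v.w (bel hnd k / sel hnd (k+1)) = _
      rw [w_div (v := v) ih (w_sel hnd (k+1))]
      rfl

lemma bel_ne_zero (k : ℕ) : bel hnd k ≠ 0 := by
  intro h
  have := w_bel (v := v) hnd k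
  rw [h, v.map_zero'] at this
  exact EReal.coe_ne_top _ this.symm

lemma bel_mem (k : ℕ) : 0 ≤ v.w (bel hnd k) := by
  rw [w_bel]
  exact_mod_cast (vb_pos hnd k).le

/-- The power series with infinitely many roots. -/
noncomputable def fser : PowerSeries v.subring :=
  PowerSeries.mk fun k => (⟨bel hnd k, bel_mem hnd k⟩ : v.subring)

lemma coeff_fser (k : ℕ) :
    ((PowerSeries.coeff k (fser hnd) : v.subring) : K) = bel hnd k := by
  simp [fser, PowerSeries.coeff_mk]

lemma fser_ne_zero : fser (v := v) hnd ≠ 0 := by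
  intro h
  have h0 : ((PowerSeries.coeff 0 (fser hnd) : v.subring) : K) = 0 := by
    rw [h]; simp
  rw [coeff_fser] at h0
  exact bel_ne_zero hnd 0 h0

/-! Newton polygon inequalities. -/

lemma polyK1 (n : ℕ) : ∀ d : ℕ, d ≤ n →
    vb hnd n + (n:ℝ) * eps hnd (n+1) + (d:ℝ) * (eps hnd n - eps hnd (n+1))
      ≤ vb hnd (n-d) + ((n-d : ℕ):ℝ) * eps hnd (n+1) := by
  intro d
  induction d with
  | zero => intro _; simp
  | succ d ih =>
      intro hd
      have ihd := ih (by omega)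
      obtain ⟨k, hk⟩ : ∃ k, n - (d+1) = k := ⟨n - (d+1), rfl⟩
      have hk1 : n - d = k + 1 := by omega
      have hk2 : k + 1 ≤ n := by omega
      rw [hk]
      rw [hk1] at ihd
      have hvb : vb hnd (k+1) = vb hnd k - eps hnd (k+1) := rfl
      rw [hvb] at ihd
      have heps : eps hnd n ≤ eps hnd (k+1) := eps_le_of_le hnd hk2
      have hcast : ((k+1 : ℕ):ℝ) = (k:ℝ) + 1 := by push_cast; ring
      rw [hcast] at ihd
      push_cast
      nlinarith [eps_pos hnd (n+1)]

lemma polyK2 (n : ℕ) : ∀ j : ℕ,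
    vb hnd (n+1) + ((n:ℝ)+1) * eps hnd (n+1) + (j:ℝ) * (eps hnd (n+1) - eps hnd (n+2))
      ≤ vb hnd (n+1+j) + ((n+1+j : ℕ):ℝ) * eps hnd (n+1) := by
  intro j
  induction j with
  | zero => simp
  | succ j ih =>
      have hvb : vb hnd (n+1+(j+1)) = vb hnd (n+1+j) - eps hnd (n+1+j+1) := by
        show vb hnd ((n+1+j)+1) = _
        rfl
      have heps : eps hnd (n+1+j+1) ≤ eps hnd (n+2) := eps_le_of_le hnd (by omega)
      rw [hvb]
      push_cast at ih ⊢
      nlinarith [eps_pos hnd (n+1)]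

end Seq

/-! ### Helpers for valuation bounds -/

section Helpers

lemma w_mul_ge3 {x y : K} {a b : ℝ} {W : EReal} (hx : W + (a : EReal) ≤ v.w x)
    (hy : (b : EReal) ≤ v.w y) : W + ((a + b : ℝ) : EReal) ≤ v.w (x * y) := by
  rw [v.map_mul', EReal.coe_add, ← add_assoc]
  exact add_le_add hx hy

lemma w_mul_ge {x y : K} {a b : ℝ} (hx : (a : EReal) ≤ v.w x)
    (hy : (b : EReal) ≤ v.w y) : ((a + b : ℝ) : EReal) ≤ v.w (x * y) := by
  rw [v.map_mul', EReal.coe_add]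
  exact add_le_add hx hy

lemma w_mul_ge3' {x y : K} {a b : ℝ} {W : EReal} (hx : (a : EReal) ≤ v.w x)
    (hy : W + (b : EReal) ≤ v.w y) : W + ((a + b : ℝ) : EReal) ≤ v.w (x * y) := by
  rw [v.map_mul', EReal.coe_add]
  calc W + ((a : EReal) + (b : EReal)) = (a : EReal) + (W + (b : EReal)) := by
        rw [← add_assoc, add_comm W, add_assoc]
  _ ≤ v.w x + v.w y := add_le_add hx hy

lemma w_shift_mono {x : EReal} {a b : ℝ} (h : b ≤ a) {Z : EReal}
    (hz : x + (a : EReal) ≤ Z) : x + (b : EReal) ≤ Z :=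
  le_trans (add_le_add_right (by exact_mod_cast h) x) hz

lemma w_div_ge {x y : K} {a s : ℝ} (hx : (a : EReal) ≤ v.w x) (hy : v.w y = (s : EReal)) :
    ((a - s : ℝ) : EReal) ≤ v.w (x / y) := by
  have hyne : y ≠ 0 := by
    intro h; rw [h, v.map_zero'] at hy; exact EReal.coe_ne_top s hy.symm
  rw [div_eq_mul_inv, v.map_mul', w_inv (v := v) hy]
  calc ((a - s : ℝ) : EReal) = (a : EReal) - (s : EReal) := EReal.coe_sub _ _
  _ = (a : EReal) + (-(s : EReal)) := sub_eq_add_neg _ _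
  _ = (a : EReal) + ((-s : ℝ) : EReal) := by rw [EReal.coe_neg]
  _ ≤ v.w x + ((-s : ℝ) : EReal) := add_le_add_left hx _

lemma w_pow_sub_ge {x y : K} {θ : ℝ} (hx : v.w x = (θ : EReal)) (hy : v.w y = (θ : EReal))
    (j : ℕ) : v.w (x - y) + ((((j:ℝ) - 1) * θ : ℝ) : EReal) ≤ v.w (x ^ j - y ^ j) := by
  cases j with
  | zero => simp [v.map_zero']
  | succ j =>
      rw [← geom_sum₂_mul x y (j+1), v.map_mul', add_comm (v.w _)]
      refine add_le_add_left ?_ _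
      refine w_sum_ge fun i hi => ?_
      have hij : i ≤ j := by
        have := Finset.mem_range.mp hi; omega
      have h1 : v.w (x ^ i * y ^ (j + 1 - 1 - i)) = ((((j:ℝ)) * θ : ℝ) : EReal) := by
        rw [v.map_mul', v.w_pow hx, v.w_pow hy, ← EReal.coe_add]
        congr 1
        have : (j + 1 - 1 - i : ℕ) = j - i := by omega
        rw [this]
        have : ((j - i : ℕ) : ℝ) = (j : ℝ) - (i : ℝ) := by
          push_cast [Nat.cast_sub hij]; ring
        rw [this]; ring
      rw [h1]
      exact_mod_cast le_of_eq (by push_cast; ring)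

lemma vpos_of_w_eq {c : K} {θ : ℝ} (hθ : 0 < θ) (hc : v.w c = (θ : EReal)) : VPos v c :=
  ⟨θ, hθ, hc⟩

lemma shf_zero (f : PowerSeries v.subring) : shf f 0 = f := by
  ext t
  simp [shf, PowerSeries.coeff_mk]

lemma ev_split (hcomp : v.IsComplete) (f : PowerSeries v.subring) {c : K} (hc : VPos v c)
    (m : ℕ) : ev hcomp f hc
      = (∑ k ∈ Finset.range m, ((PowerSeries.coeff k f : v.subring) : K) * c ^ k)
        + c ^ m * ev hcomp (shf f m) hc := by
  induction m with
  | zero => simp [shf_zero]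
  | succ m ih =>
      rw [ih, ev_shift hcomp (shf f m) hc, shf_shf]
      rw [Finset.sum_range_succ]
      have hc0 : ((PowerSeries.coeff 0 (shf f m) : v.subring) : K)
          = ((PowerSeries.coeff m f : v.subring) : K) := by
        simp [shf, PowerSeries.coeff_mk]
      rw [hc0, pow_succ]
      ring

end Helpers

/-! ### Root finding: setup and contraction -/

section Roots

lemma ne_zero_of_w_real {x : K} {r : ℝ} (h : v.w x = (r : EReal)) : x ≠ 0 := by
  intro h0
  rw [h0, v.map_zero'] at h
  exact EReal.coe_ne_top r h.symm

lemma w_add_ge {B : EReal} {x y : K} (hx : B ≤ v.w x) (hy : B ≤ v.w y) :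
    B ≤ v.w (x + y) := le_trans (le_min hx hy) (v.add_le' x y)

variable (hcomp : v.IsComplete) (hnd : v.Nondiscrete) (n : ℕ)

/-- The "low" part of the series. -/
noncomputable def Acal (c : K) : K := ∑ k ∈ Finset.range (n+1), bel hnd k * c ^ k

/-- The "high" part of the series. -/
noncomputable def Bcal {c : K} (hc : VPos v c) : K :=
  c ^ n * ev hcomp (shf (fser hnd) (n+1)) hc

lemma coeff_shf_fser (m j : ℕ) :
    ((PowerSeries.coeff j (shf (fser hnd) m) : v.subring) : K) = bel hnd (j+m) := by
  simp [shf, fser, PowerSeries.coeff_mk]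

lemma w_term_shf_fser (m j : ℕ) {c : K} {t : ℝ} (hc : v.w c = (t : EReal)) :
    v.w (((PowerSeries.coeff j (shf (fser hnd) m) : v.subring) : K) * c ^ j)
      = ((vb hnd (j+m) + j * t : ℝ) : EReal) := by
  rw [coeff_shf_fser, v.map_mul', w_bel, v.w_pow hc, ← EReal.coe_add]

lemma delta1_pos : 0 < eps hnd n - eps hnd (n+1) := sub_pos.mpr (eps_succ_lt hnd n)

lemma delta2_pos : 0 < eps hnd (n+1) - eps hnd (n+2) := sub_pos.mpr (eps_succ_lt hnd (n+1))

/-- Lower bound for the tail evaluation. -/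
lemma w_evS' {c : K} (hcv : VPos v c) (hc : v.w c = ((eps hnd (n+1) : ℝ) : EReal)) :
    ((vb hnd (n+1) - eps hnd (n+1) + (eps hnd (n+1) - eps hnd (n+2)) : ℝ) : EReal)
      ≤ v.w (ev hcomp (shf (fser hnd) (n+2)) hcv) := by
  refine ev_w_ge hcomp hcv fun j => ?_
  rw [w_term_shf_fser hnd _ _ hc]
  have hK2 := polyK2 hnd n (j+1)
  have hidx : n+1+(j+1) = j+(n+2) := by omega
  rw [hidx] at hK2
  have hδ2 := delta2_pos hnd n
  have hj : (0:ℝ) ≤ (j:ℝ) := Nat.cast_nonneg j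
  have hcast : ((j+(n+2) : ℕ):ℝ) = (j:ℝ) + (n:ℝ) + 2 := by push_cast; ring
  rw [hcast] at hK2
  push_cast at hK2 ⊢
  have : vb hnd (n+1) - eps hnd (n+1) + (eps hnd (n+1) - eps hnd (n+2))
      ≤ vb hnd (j+(n+2)) + (j:ℝ) * eps hnd (n+1) := by nlinarith
  exact_mod_cast this

/-- Exact valuation of the tail evaluation at level `n+1`. -/
lemma w_evS {c : K} (hcv : VPos v c) (hc : v.w c = ((eps hnd (n+1) : ℝ) : EReal)) :
    v.w (ev hcomp (shf (fser hnd) (n+1)) hcv) = ((vb hnd (n+1) : ℝ) : EReal) := by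
  rw [ev_shift hcomp _ hcv, shf_shf]
  have h0 : ((PowerSeries.coeff 0 (shf (fser hnd) (n+1)) : v.subring) : K)
      = bel hnd (n+1) := by
    rw [coeff_shf_fser]
    norm_num
  rw [h0]
  have hmain : v.w (bel hnd (n+1)) = ((vb hnd (n+1) : ℝ) : EReal) := w_bel hnd (n+1)
  have hrest : ((vb hnd (n+1) + (eps hnd (n+1) - eps hnd (n+2)) : ℝ) : EReal)
      ≤ v.w (c * ev hcomp (shf (fser hnd) (n+1+1)) hcv) := by
    have h1 := w_evS' hcomp hnd n hcv hc
    have h2 : ((eps hnd (n+1) + (vb hnd (n+1) - eps hnd (n+1) + (eps hnd (n+1) - eps hnd (n+2))) : ℝ) : EReal)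
        ≤ v.w (c * ev hcomp (shf (fser hnd) (n+2)) hcv) := w_mul_ge (le_of_eq hc.symm) h1
    have h3 : eps hnd (n+1) + (vb hnd (n+1) - eps hnd (n+1) + (eps hnd (n+1) - eps hnd (n+2)))
        = vb hnd (n+1) + (eps hnd (n+1) - eps hnd (n+2)) := by ring
    rw [h3] at h2
    exact h2
  have hlt : v.w (bel hnd (n+1)) < v.w (c * ev hcomp (shf (fser hnd) (n+1+1)) hcv) := by
    rw [hmain]
    refine lt_of_lt_of_le ?_ hrest
    have := delta2_pos hnd n
    exact_mod_cast by linarith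
  rw [v.w_add_eq hlt, hmain]

lemma w_Bcal {c : K} (hcv : VPos v c) (hc : v.w c = ((eps hnd (n+1) : ℝ) : EReal)) :
    v.w (Bcal hcomp hnd n hcv)
      = ((vb hnd (n+1) + (n:ℝ) * eps hnd (n+1) : ℝ) : EReal) := by
  rw [Bcal, v.map_mul', v.w_pow hc, w_evS hcomp hnd n hcv hc, ← EReal.coe_add]
  congr 1
  ring

lemma w_Acal {c : K} (hc : v.w c = ((eps hnd (n+1) : ℝ) : EReal)) :
    v.w (Acal hnd n c) = ((vb hnd n + (n:ℝ) * eps hnd (n+1) : ℝ) : EReal) := by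
  rw [Acal, Finset.sum_range_succ]
  have hmain : v.w (bel hnd n * c ^ n)
      = ((vb hnd n + (n:ℝ) * eps hnd (n+1) : ℝ) : EReal) := by
    rw [v.map_mul', w_bel, v.w_pow hc, ← EReal.coe_add]
  rcases Nat.eq_zero_or_pos n with hn0 | hnpos
  · subst hn0
    simp only [Finset.range_zero, Finset.sum_empty, zero_add]
    exact hmain
  · have hrest : ((vb hnd n + (n:ℝ) * eps hnd (n+1)
        + (eps hnd n - eps hnd (n+1)) : ℝ) : EReal)
        ≤ v.w (∑ k ∈ Finset.range n, bel hnd k * c ^ k) := by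
      refine w_sum_ge fun k hk => ?_
      have hkn : k < n := Finset.mem_range.mp hk
      have hterm : v.w (bel hnd k * c ^ k)
          = ((vb hnd k + (k:ℝ) * eps hnd (n+1) : ℝ) : EReal) := by
        rw [v.map_mul', w_bel, v.w_pow hc, ← EReal.coe_add]
      rw [hterm]
      have hK1 := polyK1 hnd n (n-k) (by omega)
      have hidx : n - (n-k) = k := by omega
      rw [hidx] at hK1
      have hd1 : (1:ℝ) ≤ ((n-k : ℕ):ℝ) := by
        have : 1 ≤ n - k := by omega
        exact_mod_cast this
      have hδ1 := delta1_pos hnd n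
      have : vb hnd n + (n:ℝ) * eps hnd (n+1) + (eps hnd n - eps hnd (n+1))
          ≤ vb hnd k + (k:ℝ) * eps hnd (n+1) := by nlinarith
      exact_mod_cast this
    have hlt : v.w (bel hnd n * c ^ n) < v.w (∑ k ∈ Finset.range n, bel hnd k * c ^ k) := by
      rw [hmain]
      refine lt_of_lt_of_le ?_ hrest
      have := delta1_pos hnd n
      exact_mod_cast by linarith
    rw [add_comm, v.w_add_eq hlt, hmain]


lemma Bcal_expand {c : K} (hcv : VPos v c) :
    Bcal hcomp hnd n hcv
      = c ^ n * (bel hnd (n+1) + c * ev hcomp (shf (fser hnd) (n+2)) hcv) := by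
  rw [Bcal, ev_shift hcomp _ hcv, shf_shf]
  have h0 : ((PowerSeries.coeff 0 (shf (fser hnd) (n+1)) : v.subring) : K)
      = bel hnd (n+1) := by
    rw [coeff_shf_fser]; norm_num
  rw [h0]

lemma Acal_expand (c : K) :
    Acal hnd n c = (∑ k ∈ Finset.range n, bel hnd k * c ^ k) + bel hnd n * c ^ n :=
  Finset.sum_range_succ _ _

lemma ev_fser_split {c : K} (hcv : VPos v c) :
    ev hcomp (fser hnd) hcv = Acal hnd n c + c * Bcal hcomp hnd n hcv := by
  rw [ev_split hcomp (fser hnd) hcv (n+1), Bcal, Acal]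
  have hsum : ∀ k : ℕ, ((PowerSeries.coeff k (fser hnd) : v.subring) : K) * c ^ k
      = bel hnd k * c ^ k := fun k => by rw [coeff_fser]
  rw [Finset.sum_congr rfl fun k _ => hsum k]
  rw [pow_succ]
  ring

lemma w_SA_ge {c : K} (hc : v.w c = ((eps hnd (n+1) : ℝ) : EReal)) :
    ((vb hnd n + (n:ℝ) * eps hnd (n+1) + (eps hnd n - eps hnd (n+1)) : ℝ) : EReal)
      ≤ v.w (∑ k ∈ Finset.range n, bel hnd k * c ^ k) := by
  refine w_sum_ge fun k hk => ?_
  have hkn : k < n := Finset.mem_range.mp hk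
  have hterm : v.w (bel hnd k * c ^ k)
      = ((vb hnd k + (k:ℝ) * eps hnd (n+1) : ℝ) : EReal) := by
    rw [v.map_mul', w_bel, v.w_pow hc, ← EReal.coe_add]
  rw [hterm]
  have hK1 := polyK1 hnd n (n-k) (by omega)
  have hidx : n - (n-k) = k := by omega
  rw [hidx] at hK1
  have hd1 : (1:ℝ) ≤ ((n-k : ℕ):ℝ) := by
    have : 1 ≤ n - k := by omega
    exact_mod_cast this
  have hδ1 := delta1_pos hnd n
  have : vb hnd n + (n:ℝ) * eps hnd (n+1) + (eps hnd n - eps hnd (n+1))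
      ≤ vb hnd k + (k:ℝ) * eps hnd (n+1) := by nlinarith
  exact_mod_cast this

/-- The key contraction estimate. -/
lemma contraction {c c' : K} (hcv : VPos v c) (hc'v : VPos v c')
    (hc : v.w c = ((eps hnd (n+1) : ℝ) : EReal))
    (hc' : v.w c' = ((eps hnd (n+1) : ℝ) : EReal))
    (hrel : Acal hnd n c + c' * Bcal hcomp hnd n hcv = 0) :
    v.w (c' - c) + ((vb hnd (n+1) + (n:ℝ) * eps hnd (n+1)
        + min (eps hnd n - eps hnd (n+1)) (eps hnd (n+1) - eps hnd (n+2)) : ℝ) : EReal)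
      ≤ v.w (ev hcomp (fser hnd) hc'v) := by
  have hδ1 := delta1_pos hnd n
  have hδ2 := delta2_pos hnd n
  have hvbs : vb hnd (n+1) = vb hnd n - eps hnd (n+1) := vb_succ hnd n
  set θ : ℝ := eps hnd (n+1) with hθdef
  set δ₁ : ℝ := eps hnd n - eps hnd (n+1) with hδ₁def
  set δ₂ : ℝ := eps hnd (n+1) - eps hnd (n+2) with hδ₂def
  have hΔδ1 : min δ₁ δ₂ ≤ δ₁ := min_le_left _ _
  have hΔδ2 : min δ₁ δ₂ ≤ δ₂ := min_le_right _ _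
  set Δ : ℝ := min δ₁ δ₂ with hΔdef
  set W : EReal := v.w (c' - c) with hWdef
  set E : K := ev hcomp (shf (fser hnd) (n+2)) hcv with hEdef
  set E' : K := ev hcomp (shf (fser hnd) (n+2)) hc'v with hE'def
  set SA : K := ∑ k ∈ Finset.range n, bel hnd k * c ^ k with hSAdef
  set SA' : K := ∑ k ∈ Finset.range n, bel hnd k * c' ^ k with hSA'def
  -- the key algebraic identity
  have e1 : ev hcomp (fser hnd) hc'v
      = SA' + bel hnd n * c' ^ n + c' * (c' ^ n * (bel hnd (n+1) + c' * E')) := by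
    rw [ev_fser_split hcomp hnd n hc'v, Acal_expand, Bcal_expand, ← hSA'def, ← hE'def]
  have e2 : SA + bel hnd n * c ^ n + c' * (c ^ n * (bel hnd (n+1) + c * E)) = 0 := by
    rw [hSAdef, hEdef, ← Acal_expand, ← Bcal_expand]
    exact hrel
  have hkeyEq : ev hcomp (fser hnd) hc'v
      = (bel hnd n + c' * bel hnd (n+1)) * (c' ^ n - c ^ n) + (SA' - SA)
        + c' * (c' ^ (n+1) * E' - c ^ (n+1) * E) := by
    linear_combination e1 + e2
  -- bound on the cancelling coefficient
  have hBw := w_Bcal hcomp hnd n hcv hc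
  have hBne : Bcal hcomp hnd n hcv ≠ 0 := ne_zero_of_w_real hBw
  have hcoef : ((vb hnd n + Δ : ℝ) : EReal) ≤ v.w (bel hnd n + c' * bel hnd (n+1)) := by
    have hc'B : c' * Bcal hcomp hnd n hcv = -(Acal hnd n c) := by linear_combination hrel
    have hnum_eq : bel hnd n + c' * bel hnd (n+1)
        = (bel hnd n * (c ^ (n+1) * E) - bel hnd (n+1) * SA) / Bcal hcomp hnd n hcv := by
      rw [eq_div_iff hBne]
      calc (bel hnd n + c' * bel hnd (n+1)) * Bcal hcomp hnd n hcv
          = bel hnd n * Bcal hcomp hnd n hcv + bel hnd (n+1) * (c' * Bcal hcomp hnd n hcv) := by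
            ring
      _ = bel hnd n * Bcal hcomp hnd n hcv - bel hnd (n+1) * Acal hnd n c := by
            rw [hc'B]; ring
      _ = bel hnd n * (c ^ (n+1) * E) - bel hnd (n+1) * SA := by
            rw [Bcal_expand, Acal_expand, ← hSAdef, ← hEdef]; ring
    rw [hnum_eq]
    have hnum_ge : ((vb hnd n + Δ + (vb hnd (n+1) + (n:ℝ) * θ) : ℝ) : EReal)
        ≤ v.w (bel hnd n * (c ^ (n+1) * E) - bel hnd (n+1) * SA) := by
      refine le_trans (le_min ?_ ?_) (w_sub_ge v _ _)
      · have h1 : ((((n:ℝ)+1) * θ + (vb hnd (n+1) - θ + δ₂) : ℝ) : EReal)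
            ≤ v.w (c ^ (n+1) * E) := by
          refine w_mul_ge ?_ ?_
          · rw [v.w_pow hc]
            exact_mod_cast le_of_eq (by push_cast; ring)
          · exact w_evS' hcomp hnd n hcv hc
        have h2 : ((vb hnd n + (((n:ℝ)+1) * θ + (vb hnd (n+1) - θ + δ₂)) : ℝ) : EReal)
            ≤ v.w (bel hnd n * (c ^ (n+1) * E)) := w_mul_ge (le_of_eq (w_bel hnd n).symm) h1
        refine le_trans ?_ h2
        have : vb hnd n + Δ + (vb hnd (n+1) + (n:ℝ) * θ)
            ≤ vb hnd n + (((n:ℝ)+1) * θ + (vb hnd (n+1) - θ + δ₂)) := by nlinarith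
        exact_mod_cast this
      · have h1 : ((vb hnd (n+1) + (vb hnd n + (n:ℝ) * θ + δ₁) : ℝ) : EReal)
            ≤ v.w (bel hnd (n+1) * SA) :=
          w_mul_ge (le_of_eq (w_bel hnd (n+1)).symm) (w_SA_ge hnd n hc)
        refine le_trans ?_ h1
        have : vb hnd n + Δ + (vb hnd (n+1) + (n:ℝ) * θ)
            ≤ vb hnd (n+1) + (vb hnd n + (n:ℝ) * θ + δ₁) := by nlinarith
        exact_mod_cast this
    have hfin := w_div_ge (v := v) hnum_ge hBw
    refine le_trans ?_ hfin
    exact_mod_cast le_of_eq (by ring)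
  -- main term
  have hmain : W + ((vb hnd (n+1) + (n:ℝ) * θ + Δ : ℝ) : EReal)
      ≤ v.w ((bel hnd n + c' * bel hnd (n+1)) * (c' ^ n - c ^ n)) := by
    have hpow : W + ((((n:ℝ) - 1) * θ : ℝ) : EReal) ≤ v.w (c' ^ n - c ^ n) :=
      w_pow_sub_ge hc' hc n
    have h2 := w_mul_ge3' (v := v) hcoef hpow
    refine w_shift_mono ?_ h2
    linarith
  -- middle term
  have hTA : W + ((vb hnd (n+1) + (n:ℝ) * θ + Δ : ℝ) : EReal) ≤ v.w (SA' - SA) := by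
    rw [hSA'def, hSAdef, ← Finset.sum_sub_distrib]
    refine w_sum_ge fun k hk => ?_
    have hkn : k < n := Finset.mem_range.mp hk
    have hterm : bel hnd k * c' ^ k - bel hnd k * c ^ k = bel hnd k * (c' ^ k - c ^ k) := by
      ring
    rw [hterm]
    have h2 := w_mul_ge3' (v := v) (le_of_eq (w_bel hnd k).symm) (w_pow_sub_ge hc' hc k)
    refine w_shift_mono ?_ h2
    have hK1 := polyK1 hnd n (n-k) (by omega)
    have hidx : n - (n-k) = k := by omega
    rw [hidx] at hK1
    have hd1 : (1:ℝ) ≤ ((n-k : ℕ):ℝ) := by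
      have : 1 ≤ n - k := by omega
      exact_mod_cast this
    nlinarith
  -- tail term
  have hTBin : W + ((vb hnd (n+1) + (n:ℝ) * θ - θ + δ₂ : ℝ) : EReal)
      ≤ v.w (c' ^ (n+1) * E' - c ^ (n+1) * E) := by
    have hD : v.TendstoV
        (fun M => c' ^ (n+1) * psum (shf (fser hnd) (n+2)) c' M
          - c ^ (n+1) * psum (shf (fser hnd) (n+2)) c M)
        (c' ^ (n+1) * E' - c ^ (n+1) * E) :=
      ((ev_spec hcomp _ hc'v).mul_left _).sub ((ev_spec hcomp _ hcv).mul_left _)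
    refine hD.w_ge fun M => ?_
    have hid : c' ^ (n+1) * psum (shf (fser hnd) (n+2)) c' M
        - c ^ (n+1) * psum (shf (fser hnd) (n+2)) c M
        = ∑ j ∈ Finset.range M, bel hnd (j+(n+2)) * (c' ^ (n+1+j) - c ^ (n+1+j)) := by
      rw [psum, psum, Finset.mul_sum, Finset.mul_sum, ← Finset.sum_sub_distrib]
      refine Finset.sum_congr rfl fun j _ => ?_
      rw [coeff_shf_fser, pow_add, pow_add]
      ring
    rw [hid]
    refine w_sum_ge fun j _ => ?_
    have h2 := w_mul_ge3' (v := v) (le_of_eq (w_bel hnd (j+(n+2))).symm)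
      (w_pow_sub_ge hc' hc (n+1+j))
    refine w_shift_mono ?_ h2
    have hK2 := polyK2 hnd n (j+1)
    have hidx : n+1+(j+1) = j+(n+2) := by omega
    rw [hidx] at hK2
    have hc1 : ((j+(n+2) : ℕ):ℝ) = (j:ℝ) + (n:ℝ) + 2 := by push_cast; ring
    have hc2 : ((j+1 : ℕ):ℝ) = (j:ℝ) + 1 := by push_cast; ring
    have hc3 : ((n+1+j : ℕ):ℝ) = (n:ℝ) + 1 + (j:ℝ) := by push_cast; ring
    rw [hc1, hc2] at hK2
    rw [hc3]
    have hj : (0:ℝ) ≤ (j:ℝ) := Nat.cast_nonneg j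
    nlinarith
  have hTB : W + ((vb hnd (n+1) + (n:ℝ) * θ + Δ : ℝ) : EReal)
      ≤ v.w (c' * (c' ^ (n+1) * E' - c ^ (n+1) * E)) := by
    have h2 := w_mul_ge3' (v := v) (le_of_eq hc'.symm) hTBin
    refine w_shift_mono ?_ h2
    linarith
  rw [hkeyEq]
  exact w_add_ge (w_add_ge hmain hTA) hTB



/-! ### The iteration and existence of roots -/

noncomputable def phiStep {c : K} (hc : v.w c = ((eps hnd (n+1) : ℝ) : EReal)) : K :=
  -(Acal hnd n c) / Bcal hcomp hnd n (vpos_of_w_eq (eps_pos hnd (n+1)) hc)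

lemma w_phiStep {c : K} (hc : v.w c = ((eps hnd (n+1) : ℝ) : EReal)) :
    v.w (phiStep hcomp hnd n hc) = ((eps hnd (n+1) : ℝ) : EReal) := by
  have hcv := vpos_of_w_eq (eps_pos hnd (n+1)) hc
  have hA := w_Acal hnd n hc
  have hnA : v.w (-(Acal hnd n c))
      = ((vb hnd n + (n:ℝ) * eps hnd (n+1) : ℝ) : EReal) := by
    rw [v.map_neg']; exact hA
  have hB := w_Bcal hcomp hnd n hcv hc
  rw [phiStep, w_div (v := v) hnA hB]
  congr 1
  have := vb_succ hnd n
  linarith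

lemma phiStep_rel {c : K} (hc : v.w c = ((eps hnd (n+1) : ℝ) : EReal)) :
    Acal hnd n c + phiStep hcomp hnd n hc
      * Bcal hcomp hnd n (vpos_of_w_eq (eps_pos hnd (n+1)) hc) = 0 := by
  have hcv := vpos_of_w_eq (eps_pos hnd (n+1)) hc
  have hBne : Bcal hcomp hnd n hcv ≠ 0 :=
    ne_zero_of_w_real (w_Bcal hcomp hnd n hcv hc)
  rw [phiStep]
  field_simp
  ring

lemma phiStep_sub {c : K} (hc : v.w c = ((eps hnd (n+1) : ℝ) : EReal)) :
    phiStep hcomp hnd n hc - c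
      = -(ev hcomp (fser hnd) (vpos_of_w_eq (eps_pos hnd (n+1)) hc))
        / Bcal hcomp hnd n (vpos_of_w_eq (eps_pos hnd (n+1)) hc) := by
  have hcv := vpos_of_w_eq (eps_pos hnd (n+1)) hc
  have hBne : Bcal hcomp hnd n hcv ≠ 0 :=
    ne_zero_of_w_real (w_Bcal hcomp hnd n hcv hc)
  rw [ev_fser_split hcomp hnd n hcv, phiStep]
  field_simp
  ring

noncomputable def rootIter : ℕ → {c : K // v.w c = ((eps hnd (n+1) : ℝ) : EReal)}
  | 0 => ⟨sel hnd (n+1), w_sel hnd (n+1)⟩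
  | (m+1) => ⟨phiStep hcomp hnd n (rootIter m).2, w_phiStep hcomp hnd n (rootIter m).2⟩

lemma rootIter_ev_ge (m : ℕ) :
    ((vb hnd (n+1) + ((n:ℝ)+1) * eps hnd (n+1)
      + (m:ℝ) * min (eps hnd n - eps hnd (n+1)) (eps hnd (n+1) - eps hnd (n+2)) : ℝ) : EReal)
    ≤ v.w (ev hcomp (fser hnd)
        (vpos_of_w_eq (eps_pos hnd (n+1)) (rootIter hcomp hnd n m).2)) := by
  induction m with
  | zero =>
      refine ev_w_ge hcomp _ fun k => ?_
      have hc := (rootIter hcomp hnd n 0).2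
      have hterm : v.w (((PowerSeries.coeff k (fser hnd) : v.subring) : K)
          * ((rootIter hcomp hnd n 0).1) ^ k)
          = ((vb hnd k + (k:ℝ) * eps hnd (n+1) : ℝ) : EReal) := by
        rw [coeff_fser, v.map_mul', w_bel, v.w_pow hc, ← EReal.coe_add]
      rw [hterm]
      have hvbs := vb_succ hnd n
      rcases le_or_gt k n with hk | hk
      · have hK1 := polyK1 hnd n (n-k) (by omega)
        have hidx : n - (n-k) = k := by omega
        rw [hidx] at hK1
        have hd0 : (0:ℝ) ≤ ((n-k : ℕ):ℝ) := Nat.cast_nonneg _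
        have hδ1 := delta1_pos hnd n
        have h4 : vb hnd (n+1) + ((n:ℝ)+1) * eps hnd (n+1)
            + ((0:ℕ):ℝ) * min (eps hnd n - eps hnd (n+1)) (eps hnd (n+1) - eps hnd (n+2))
            ≤ vb hnd k + (k:ℝ) * eps hnd (n+1) := by
          push_cast
          nlinarith
        exact_mod_cast h4
      · have hK2 := polyK2 hnd n (k-(n+1))
        have hidx : n+1+(k-(n+1)) = k := by omega
        rw [hidx] at hK2
        have hd0 : (0:ℝ) ≤ ((k-(n+1) : ℕ):ℝ) := Nat.cast_nonneg _
        have hδ2 := delta2_pos hnd n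
        have h4 : vb hnd (n+1) + ((n:ℝ)+1) * eps hnd (n+1)
            + ((0:ℕ):ℝ) * min (eps hnd n - eps hnd (n+1)) (eps hnd (n+1) - eps hnd (n+2))
            ≤ vb hnd k + (k:ℝ) * eps hnd (n+1) := by
          push_cast
          nlinarith
        exact_mod_cast h4
  | succ m ih =>
      set c : K := (rootIter hcomp hnd n m).1 with hcdef
      have hc : v.w c = ((eps hnd (n+1) : ℝ) : EReal) := (rootIter hcomp hnd n m).2
      have hcv := vpos_of_w_eq (eps_pos hnd (n+1)) hc
      have hc' : v.w ((rootIter hcomp hnd n (m+1)).1) = ((eps hnd (n+1) : ℝ) : EReal) :=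
        (rootIter hcomp hnd n (m+1)).2
      have hc'v := vpos_of_w_eq (eps_pos hnd (n+1)) hc'
      have hstep : (rootIter hcomp hnd n (m+1)).1 = phiStep hcomp hnd n hc := rfl
      -- increment bound
      have hincr : ((eps hnd (n+1)
          + (m:ℝ) * min (eps hnd n - eps hnd (n+1)) (eps hnd (n+1) - eps hnd (n+2)) : ℝ) : EReal)
          ≤ v.w ((rootIter hcomp hnd n (m+1)).1 - c) := by
        rw [hstep, phiStep_sub hcomp hnd n hc]
        have hnum : ((vb hnd (n+1) + ((n:ℝ)+1) * eps hnd (n+1)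
            + (m:ℝ) * min (eps hnd n - eps hnd (n+1)) (eps hnd (n+1) - eps hnd (n+2)) : ℝ) : EReal)
            ≤ v.w (-(ev hcomp (fser hnd) hcv)) := by
          rw [v.map_neg']
          exact ih
        have hfin := w_div_ge (v := v) hnum (w_Bcal hcomp hnd n hcv hc)
        refine le_trans ?_ hfin
        have hre : eps hnd (n+1)
            + (m:ℝ) * min (eps hnd n - eps hnd (n+1)) (eps hnd (n+1) - eps hnd (n+2))
            = vb hnd (n+1) + ((n:ℝ)+1) * eps hnd (n+1)
              + (m:ℝ) * min (eps hnd n - eps hnd (n+1)) (eps hnd (n+1) - eps hnd (n+2))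
              - (vb hnd (n+1) + (n:ℝ) * eps hnd (n+1)) := by ring
        rw [hre]
      have hcontr := contraction hcomp hnd n hcv hc'v hc hc' (by
        rw [hstep]; exact phiStep_rel hcomp hnd n hc)
      have hW : ((eps hnd (n+1)
          + (m:ℝ) * min (eps hnd n - eps hnd (n+1)) (eps hnd (n+1) - eps hnd (n+2)) : ℝ) : EReal)
          + ((vb hnd (n+1) + (n:ℝ) * eps hnd (n+1)
          + min (eps hnd n - eps hnd (n+1)) (eps hnd (n+1) - eps hnd (n+2)) : ℝ) : EReal)
          ≤ v.w ((rootIter hcomp hnd n (m+1)).1 - c)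
            + ((vb hnd (n+1) + (n:ℝ) * eps hnd (n+1)
            + min (eps hnd n - eps hnd (n+1)) (eps hnd (n+1) - eps hnd (n+2)) : ℝ) : EReal) :=
        add_le_add_left hincr _
      refine le_trans ?_ (le_trans hW hcontr)
      rw [← EReal.coe_add]
      exact_mod_cast le_of_eq (by push_cast; ring)

lemma rootIter_incr (m : ℕ) :
    ((eps hnd (n+1)
      + (m:ℝ) * min (eps hnd n - eps hnd (n+1)) (eps hnd (n+1) - eps hnd (n+2)) : ℝ) : EReal)
    ≤ v.w ((rootIter hcomp hnd n (m+1)).1 - (rootIter hcomp hnd n m).1) := by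
  have hc : v.w ((rootIter hcomp hnd n m).1) = ((eps hnd (n+1) : ℝ) : EReal) :=
    (rootIter hcomp hnd n m).2
  have hcv := vpos_of_w_eq (eps_pos hnd (n+1)) hc
  have hstep : (rootIter hcomp hnd n (m+1)).1 = phiStep hcomp hnd n hc := rfl
  rw [hstep, phiStep_sub hcomp hnd n hc]
  have hnum : ((vb hnd (n+1) + ((n:ℝ)+1) * eps hnd (n+1)
      + (m:ℝ) * min (eps hnd n - eps hnd (n+1)) (eps hnd (n+1) - eps hnd (n+2)) : ℝ) : EReal)
      ≤ v.w (-(ev hcomp (fser hnd) hcv)) := by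
    rw [v.map_neg']
    exact rootIter_ev_ge hcomp hnd n m
  have hfin := w_div_ge (v := v) hnum (w_Bcal hcomp hnd n hcv hc)
  refine le_trans ?_ hfin
  have hre : eps hnd (n+1)
      + (m:ℝ) * min (eps hnd n - eps hnd (n+1)) (eps hnd (n+1) - eps hnd (n+2))
      = vb hnd (n+1) + ((n:ℝ)+1) * eps hnd (n+1)
        + (m:ℝ) * min (eps hnd n - eps hnd (n+1)) (eps hnd (n+1) - eps hnd (n+2))
        - (vb hnd (n+1) + (n:ℝ) * eps hnd (n+1)) := by ring
  rw [hre]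

lemma rootIter_gap {m m' : ℕ} (h : m ≤ m') :
    ((eps hnd (n+1)
      + (m:ℝ) * min (eps hnd n - eps hnd (n+1)) (eps hnd (n+1) - eps hnd (n+2)) : ℝ) : EReal)
    ≤ v.w ((rootIter hcomp hnd n m').1 - (rootIter hcomp hnd n m).1) := by
  induction m', h using Nat.le_induction with
  | base =>
      rw [sub_self, v.map_zero']
      exact le_top
  | succ m' hmm' ih =>
      have hid : (rootIter hcomp hnd n (m'+1)).1 - (rootIter hcomp hnd n m).1
          = ((rootIter hcomp hnd n (m'+1)).1 - (rootIter hcomp hnd n m').1)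
            + ((rootIter hcomp hnd n m').1 - (rootIter hcomp hnd n m).1) := by ring
      rw [hid]
      refine w_add_ge ?_ ih
      refine le_trans ?_ (rootIter_incr hcomp hnd n m')
      have hΔ : 0 ≤ min (eps hnd n - eps hnd (n+1)) (eps hnd (n+1) - eps hnd (n+2)) :=
        le_min (delta1_pos hnd n).le (delta2_pos hnd n).le
      have : (m:ℝ) ≤ (m':ℝ) := by exact_mod_cast hmm'
      exact_mod_cast by nlinarith

lemma exists_root :
    ∃ (c : K) (hcv : VPos v c),
      v.w c = ((eps hnd (n+1) : ℝ) : EReal) ∧ ev hcomp (fser hnd) hcv = 0 := by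
  set θ : ℝ := eps hnd (n+1) with hθdef
  set Δ : ℝ := min (eps hnd n - eps hnd (n+1)) (eps hnd (n+1) - eps hnd (n+2)) with hΔdef
  have hΔpos : 0 < Δ := lt_min (delta1_pos hnd n) (delta2_pos hnd n)
  have hθpos : 0 < θ := eps_pos hnd (n+1)
  -- choice of large indices
  have harch : ∀ M : ℝ, ∃ m : ℕ, M ≤ θ + (m:ℝ) * Δ := by
    intro M
    obtain ⟨m, hm⟩ := exists_nat_ge ((M - θ)/Δ)
    refine ⟨m, ?_⟩
    rw [div_le_iff₀ hΔpos] at hm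
    linarith
  -- Cauchy
  have hcau : ∀ M : ℝ, ∃ N : ℕ, ∀ a ≥ N, ∀ b ≥ N,
      (M : EReal) ≤ v.w ((rootIter hcomp hnd n a).1 - (rootIter hcomp hnd n b).1) := by
    intro M
    obtain ⟨N, hN⟩ := harch M
    refine ⟨N, fun a ha b hb => ?_⟩
    have hmono : ∀ p q : ℕ, N ≤ p → p ≤ q →
        (M : EReal) ≤ v.w ((rootIter hcomp hnd n q).1 - (rootIter hcomp hnd n p).1) := by
      intro p q hp hpq
      refine le_trans ?_ (rootIter_gap hcomp hnd n hpq)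
      have : (N:ℝ) ≤ (p:ℝ) := by exact_mod_cast hp
      exact_mod_cast by nlinarith
    rcases le_total b a with h | h
    · exact hmono b a hb h
    · have := hmono a b ha h
      have hneg : (rootIter hcomp hnd n a).1 - (rootIter hcomp hnd n b).1
          = -((rootIter hcomp hnd n b).1 - (rootIter hcomp hnd n a).1) := by ring
      rw [hneg, v.map_neg']
      exact this
  obtain ⟨L, hL⟩ := hcomp (fun m => (rootIter hcomp hnd n m).1) hcau
  have hLten : v.TendstoV (fun m => (rootIter hcomp hnd n m).1) L := hL
  -- distance from L to the iterates
  have hLm : ∀ m : ℕ, ((θ + (m:ℝ) * Δ : ℝ) : EReal)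
      ≤ v.w (L - (rootIter hcomp hnd n m).1) := by
    intro m
    obtain ⟨N, hN⟩ := hLten (θ + (m:ℝ) * Δ)
    set m'' := max N m with hm''def
    have h1 := hN m'' (le_max_left _ _)
    have h2 := rootIter_gap hcomp hnd n (le_max_right N m)
    have hid : L - (rootIter hcomp hnd n m).1
        = ((rootIter hcomp hnd n m'').1 - (rootIter hcomp hnd n m).1)
          - ((rootIter hcomp hnd n m'').1 - L) := by ring
    rw [hid]
    exact le_trans (le_min h2 h1) (w_sub_ge v _ _)
  -- valuation of the limit
  have hwL : v.w L = ((θ : ℝ) : EReal) := by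
    have h1 : v.w (L - (rootIter hcomp hnd n 1).1) > ((θ : ℝ) : EReal) := by
      refine lt_of_lt_of_le ?_ (hLm 1)
      exact_mod_cast by nlinarith
    have h2 : v.w ((rootIter hcomp hnd n 1).1) = ((θ : ℝ) : EReal) :=
      (rootIter hcomp hnd n 1).2
    have hid : L = (rootIter hcomp hnd n 1).1 + (L - (rootIter hcomp hnd n 1).1) := by ring
    rw [hid, v.w_add_eq (by rw [h2]; exact h1), h2]
  have hLv : VPos v L := vpos_of_w_eq hθpos hwL
  refine ⟨L, hLv, hwL, ?_⟩
  -- the limit is a root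
  have hlip : ∀ m : ℕ, v.w (L - (rootIter hcomp hnd n m).1)
      ≤ v.w (ev hcomp (fser hnd) hLv
        - ev hcomp (fser hnd) (vpos_of_w_eq hθpos (rootIter hcomp hnd n m).2)) := by
    intro m
    set c : K := (rootIter hcomp hnd n m).1 with hcdef
    have hc : v.w c = ((θ : ℝ) : EReal) := (rootIter hcomp hnd n m).2
    have hcv := vpos_of_w_eq hθpos hc
    have hD : v.TendstoV (fun M => psum (fser hnd) L M - psum (fser hnd) c M)
        (ev hcomp (fser hnd) hLv - ev hcomp (fser hnd) hcv) :=
      (ev_spec hcomp _ hLv).sub (ev_spec hcomp _ hcv)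
    refine hD.w_ge fun M => ?_
    have hid : psum (fser hnd) L M - psum (fser hnd) c M
        = ∑ k ∈ Finset.range M, bel hnd k * (L ^ k - c ^ k) := by
      rw [psum, psum, ← Finset.sum_sub_distrib]
      refine Finset.sum_congr rfl fun k _ => ?_
      rw [coeff_fser]
      ring
    rw [hid]
    refine w_sum_ge fun k _ => ?_
    have h2 := w_mul_ge3' (v := v) (le_of_eq (w_bel hnd k).symm) (w_pow_sub_ge hwL hc k)
    have h3 := w_shift_mono (b := 0) ?_ h2
    · calc v.w (L - c) = v.w (L - c) + ((0:ℝ) : EReal) := by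
            norm_num
      _ ≤ _ := h3
    · -- 0 ≤ vb k + (k-1)θ
      have hvbk := vb_ge hnd k
      have hek := eps_pos hnd k
      have he0 : θ ≤ eps hnd 0 := eps_le_of_le hnd (by omega)
      have hk0 : (0:ℝ) ≤ (k:ℝ) := Nat.cast_nonneg k
      nlinarith
  have hall : ∀ M : ℝ, (M : EReal) ≤ v.w (ev hcomp (fser hnd) hLv) := by
    intro M
    obtain ⟨m, hm⟩ := harch M
    set c : K := (rootIter hcomp hnd n m).1 with hcdef
    have hc : v.w c = ((θ : ℝ) : EReal) := (rootIter hcomp hnd n m).2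
    have hcv := vpos_of_w_eq hθpos hc
    have hid : ev hcomp (fser hnd) hLv
        = (ev hcomp (fser hnd) hLv - ev hcomp (fser hnd) hcv)
          + ev hcomp (fser hnd) hcv := by ring
    rw [hid]
    refine w_add_ge ?_ ?_
    · refine le_trans ?_ (le_trans (hLm m) (hlip m))
      exact_mod_cast hm
    · refine le_trans ?_ (rootIter_ev_ge hcomp hnd n m)
      have hvb := vb_pos hnd (n+1)
      have : M ≤ vb hnd (n+1) + ((n:ℝ)+1) * θ + (m:ℝ) * Δ := by nlinarith
      exact_mod_cast this
  exact w_eq_top hall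



/-! ### Uniqueness of linear divisors -/

lemma linear_divisor_eq {a b : v.subring} (hvb : VPos v (↑b : K))
    (hdvd : (PowerSeries.X - PowerSeries.C b)
      ∣ (PowerSeries.X - PowerSeries.C a)) :
    a = b := by
  obtain ⟨h, hh⟩ := hdvd
  obtain ⟨θb, hθbpos, hθb⟩ := hvb
  -- coefficient 0
  have e0 : -a = -(b * PowerSeries.coeff 0 h) := by
    have := congrArg (PowerSeries.coeff 0) hh
    rw [coeff_zero_X_sub_C_mul, map_sub] at this
    rw [← this]
    simp [PowerSeries.coeff_C]
  -- coefficient 1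
  have e1 : (1 : v.subring) = PowerSeries.coeff 0 h
      - b * PowerSeries.coeff 1 h := by
    have := congrArg (PowerSeries.coeff 1) hh
    rw [coeff_succ_X_sub_C_mul, map_sub] at this
    rw [← this]
    simp [PowerSeries.coeff_C, PowerSeries.coeff_one_X]
  -- higher coefficients
  have hrec : ∀ i : ℕ, PowerSeries.coeff (i+1) h
      = b * PowerSeries.coeff (i+2) h := by
    intro i
    have hz : PowerSeries.coeff (i+2) (PowerSeries.X : PowerSeries v.subring) = 0 := by
      rw [PowerSeries.coeff_X]
      simp
    have h3 := congrArg (PowerSeries.coeff (i+2)) hh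
    rw [coeff_succ_X_sub_C_mul, map_sub, hz, PowerSeries.coeff_C,
      if_neg (by omega : ¬ i+2 = 0)] at h3
    linear_combination -h3
  -- the chain
  have hchain : ∀ t : ℕ, PowerSeries.coeff 1 h
      = b ^ t * PowerSeries.coeff (1+t) h := by
    intro t
    induction t with
    | zero => simp
    | succ t ih =>
        rw [ih]
        have := hrec t
        have hidx : t + 1 = 1 + t := by omega
        rw [hidx] at this
        rw [this]
        have hidx2 : t + 2 = 1 + (t+1) := by omega
        rw [hidx2]
        ring
  -- coefficient 1 of h vanishes
  have hzero : PowerSeries.coeff 1 h = 0 := by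
    by_contra hne
    have hzne : ((PowerSeries.coeff 1 h : v.subring) : K) ≠ 0 := by
      intro h0
      exact hne (Subtype.ext h0)
    obtain ⟨ρ, hρ⟩ := v.finite' _ hzne
    obtain ⟨t, ht⟩ := exists_nat_ge ((ρ + 1) / θb)
    have htθ : ρ < (t:ℝ) * θb := by
      rw [div_le_iff₀ hθbpos] at ht
      linarith
    have hw : (((t:ℝ) * θb : ℝ) : EReal)
        ≤ v.w ((PowerSeries.coeff 1 h : v.subring) : K) := by
      have hcoe : ((PowerSeries.coeff 1 h : v.subring) : K)
          = ((↑b : K)) ^ t * ((PowerSeries.coeff (1+t) h : v.subring) : K) := by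
        have := congrArg (fun z : v.subring => (z : K)) (hchain t)
        push_cast at this
        exact this
      rw [hcoe]
      have h1 : v.w (((↑b : K)) ^ t) = (((t:ℝ) * θb : ℝ) : EReal) := v.w_pow hθb t
      have h2 := w_coe_nonneg (v := v) (PowerSeries.coeff (1+t) h)
      calc (((t:ℝ) * θb : ℝ) : EReal) = (((t:ℝ) * θb + 0 : ℝ) : EReal) := by norm_num
      _ ≤ _ := w_mul_ge (le_of_eq h1.symm) h2
    rw [hρ] at hw
    have : (t:ℝ) * θb ≤ ρ := by exact_mod_cast hw
    linarith
  -- conclude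
  have h0eq : PowerSeries.coeff 0 h = 1 := by
    have := e1
    rw [hzero, mul_zero, sub_zero] at this
    exact this.symm
  have hab : -a = -(b * 1) := by rw [← h0eq]; exact e0
  rw [mul_one] at hab
  exact neg_injective hab


end Roots




end AddRealValuation

set_option maxHeartbeats 1000000 in
open AddRealValuation in
private theorem statement13_aux {K : Type*} [Field K] (v : AddRealValuation K)
    (hcomp : v.IsComplete) (hnd : v.Nondiscrete) :
    ¬ ∃ 𝓕 : Set (AddRealValuation (FractionRing (PowerSeries v.subring))),
      IsGKFamily (PowerSeries v.subring) (FractionRing (PowerSeries v.subring)) 𝓕 := by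
  rintro ⟨𝓕, hGK⟩
  classical
  obtain ⟨hA, hB, hC⟩ := hGK
  set Φ := algebraMap (PowerSeries v.subring) (FractionRing (PowerSeries v.subring)) with hΦdef
  have hinj : Function.Injective Φ := IsFractionRing.injective _ _
  have halg_ne : ∀ d : PowerSeries v.subring, d ≠ 0 → Φ d ≠ 0 := fun d hd h0 =>
    hd (hinj (by rw [h0, map_zero]))
  -- nonnegativity of the u's on the power series ring
  have hb0 : ∀ u ∈ 𝓕, ∃ b : PowerSeries v.subring, b ≠ 0 ∧ ¬ 0 < u.w (Φ b) := by
    intro u hu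
    obtain ⟨a, b, hb, hble, -⟩ := (hA u hu 1).mp (by rw [u.map_one'])
    exact ⟨b, hb, hble⟩
  have hnneg : ∀ u ∈ 𝓕, ∀ d : PowerSeries v.subring, 0 ≤ u.w (Φ d) := by
    intro u hu d
    obtain ⟨b, hb, hble⟩ := hb0 u hu
    exact (hA u hu (Φ d)).mpr ⟨d * b, b, hb, hble, by rw [map_mul]⟩
  -- two distinct linear primes cannot both be positive for a single valuation
  have two_primes : ∀ u ∈ 𝓕, ∀ a b : v.subring, VPos v (↑a : K) → VPos v (↑b : K) →
      0 < u.w (Φ (PowerSeries.X - PowerSeries.C a)) →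
      0 < u.w (Φ (PowerSeries.X - PowerSeries.C b)) → a = b := by
    intro u hu a b hva hvb hwa hwb
    set πa := PowerSeries.X - PowerSeries.C a with hπadef
    set πb := PowerSeries.X - PowerSeries.C b with hπbdef
    have hπane : πa ≠ 0 := X_sub_C_ne_zero
    have hπbne : πb ≠ 0 := X_sub_C_ne_zero
    obtain ⟨ra, hra⟩ := u.finite' (Φ πa) (halg_ne _ hπane)
    obtain ⟨rb, hrb⟩ := u.finite' (Φ πb) (halg_ne _ hπbne)
    have hra0 : 0 < ra := by
      have h2 := hwa; rw [hra] at h2; exact_mod_cast h2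
    have hrb0 : 0 < rb := by
      have h2 := hwb; rw [hrb] at h2; exact_mod_cast h2
    obtain ⟨k, hk⟩ := exists_nat_ge (rb / ra)
    have hkra : rb ≤ (k:ℝ) * ra := by
      rw [div_le_iff₀ hra0] at hk; linarith
    set x := Φ (πa ^ k) * (Φ πb)⁻¹ with hxdef
    have hπbF : Φ πb ≠ 0 := halg_ne _ hπbne
    have hxmul : x * Φ πb = Φ (πa ^ k) := by
      rw [hxdef]
      exact inv_mul_cancel_right₀ hπbF _
    have hwpow : u.w (Φ (πa ^ k)) = (((k:ℝ) * ra : ℝ) : EReal) := by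
      rw [map_pow]
      exact u.w_pow hra k
    have hxne : x ≠ 0 :=
      mul_ne_zero (halg_ne _ (pow_ne_zero _ hπane)) (inv_ne_zero hπbF)
    have hxw : 0 ≤ u.w x := by
      obtain ⟨t, ht⟩ := u.finite' x hxne
      rw [ht]
      have h2 : u.w x + u.w (Φ πb) = u.w (Φ (πa^k)) := by rw [← u.map_mul', hxmul]
      rw [ht, hrb, hwpow, ← EReal.coe_add] at h2
      have h3 : t + rb = (k:ℝ) * ra := by exact_mod_cast h2
      have h4 : 0 ≤ t := by linarith
      exact_mod_cast h4
    obtain ⟨p, q, hq, hqle, heq⟩ := (hA u hu x).mp hxw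
    have hDeq : πa ^ k * q = p * πb := by
      apply hinj
      rw [map_mul, map_mul]
      calc Φ (πa^k) * Φ q = (x * Φ πb) * Φ q := by rw [hxmul]
      _ = (x * Φ q) * Φ πb := mul_right_comm x (Φ πb) (Φ q)
      _ = Φ p * Φ πb := by rw [heq]
    have hprime : Prime πb := prime_X_sub_C hcomp hvb
    have hdvd : πb ∣ πa ^ k * q := ⟨p, by linear_combination hDeq⟩
    rcases hprime.2.2 _ _ hdvd with hdd | hdd
    · exact linear_divisor_eq hvb (hprime.dvd_of_dvd_pow hdd)
    · obtain ⟨q', rfl⟩ := hdd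
      refine absurd ?_ hqle
      rw [map_mul, u.map_mul']
      calc (0:EReal) < u.w (Φ πb) := hwb
      _ ≤ u.w (Φ πb) + u.w (Φ q') := le_add_of_nonneg_right (hnneg u hu q')
  -- the roots of the special power series
  have hroots : ∀ n : ℕ, ∃ cR : v.subring,
      v.w (↑cR : K) = ((eps hnd (n+1) : ℝ) : EReal)
      ∧ (PowerSeries.X - PowerSeries.C cR) ∣ fser hnd := by
    intro n
    obtain ⟨c, hcv, hw, hev⟩ := exists_root hcomp hnd n
    have hmem : (0:EReal) ≤ v.w c := by
      rw [hw]; exact_mod_cast (eps_pos hnd (n+1)).le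
    refine ⟨⟨c, hmem⟩, hw, ?_⟩
    rw [X_sub_C_dvd_iff hcomp hcv]
    exact hev
  choose cR hcw hcdvd using hroots
  have hcvpos : ∀ n, VPos v (↑(cR n) : K) := fun n =>
    vpos_of_w_eq (eps_pos hnd (n+1)) (hcw n)
  -- for each root there is a valuation positive at the corresponding prime
  have hexu : ∀ n : ℕ, ∃ u, u ∈ 𝓕 ∧
      0 < u.w (Φ (PowerSeries.X - PowerSeries.C (cR n))) := by
    intro n
    set c := cR n with hcdef
    set π := PowerSeries.X - PowerSeries.C c with hπdef
    have hπne : π ≠ 0 := X_sub_C_ne_zero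
    have hπF : Φ π ≠ 0 := halg_ne _ hπne
    have hcne : (↑c : K) ≠ 0 := w_pos_ne_zero (hcvpos n)
    have hccne : c * c ≠ 0 := by
      intro h0
      have h1 := congrArg (fun z : v.subring => (z : K)) h0
      push_cast at h1
      exact hcne (by
        rcases mul_eq_zero.mp h1 with h | h
        · exact h
        · exact h)
    have hCcne : (PowerSeries.C (c * c)) ≠ 0 := by
      intro h0
      have h1 := congrArg (PowerSeries.constantCoeff) h0
      rw [PowerSeries.constantCoeff_C, map_zero] at h1
      exact hccne h1
    set x := Φ (PowerSeries.C (c * c)) * (Φ π)⁻¹ with hxdef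
    have hxmul : x * Φ π = Φ (PowerSeries.C (c * c)) := by
      rw [hxdef]
      exact inv_mul_cancel_right₀ hπF _
    have hximg : ¬ ∀ u ∈ 𝓕, 0 ≤ u.w x := by
      intro hall
      obtain ⟨d, hd⟩ := hB x hall
      have hDeq : PowerSeries.C (c * c) = d * π := by
        apply hinj
        rw [map_mul Φ d π, ← hxmul, hd]
      have hse : ev hcomp (PowerSeries.C (c * c)) (hcvpos n)
          = ev hcomp (d * π) (hcvpos n) := by rw [hDeq]
      rw [ev_C] at hse
      rw [show d * π = π * d from mul_comm _ _] at hse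
      rw [hπdef, ev_X_sub_C_mul hcomp c d (hcvpos n)] at hse
      have h1 : ((c * c : v.subring) : K) = 0 := hse
      push_cast at h1
      rcases mul_eq_zero.mp h1 with h | h
      · exact hcne h
      · exact hcne h
    push_neg at hximg
    obtain ⟨u, hu, hult⟩ := hximg
    refine ⟨u, hu, ?_⟩
    have hxne : x ≠ 0 := mul_ne_zero (halg_ne _ hCcne) (inv_ne_zero hπF)
    obtain ⟨t, ht⟩ := u.finite' x hxne
    obtain ⟨p, hp⟩ := u.finite' (Φ π) (halg_ne _ hπne)
    have hrel2 : ((t + p : ℝ) : EReal) = u.w (Φ (PowerSeries.C (c * c))) := by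
      rw [EReal.coe_add, ← ht, ← hp, ← u.map_mul', hxmul]
    have hCge : 0 ≤ u.w (Φ (PowerSeries.C (c * c))) := hnneg u hu _
    have ht0 : t < 0 := by
      rw [ht] at hult
      exact_mod_cast hult
    have htp : 0 ≤ t + p := by
      rw [← hrel2] at hCge
      exact_mod_cast hCge
    rw [hp]
    have : (0:ℝ) < p := by linarith
    exact_mod_cast this
  choose uu huu hupos using hexu
  -- the chosen valuations are pairwise distinct
  have hepsinj : ∀ {i j : ℕ}, eps hnd i = eps hnd j → i = j := by
    intro i j hij
    by_contra hne
    rcases Nat.lt_or_ge i j with h | h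
    · have h1 := eps_le_of_le hnd (show i+1 ≤ j by omega)
      have h2 := eps_succ_lt hnd i
      linarith
    · have hlt : j < i := by omega
      have h1 := eps_le_of_le hnd (show j+1 ≤ i by omega)
      have h2 := eps_succ_lt hnd j
      linarith
  have huinj : Function.Injective uu := by
    intro m m' hmm
    have h1 := hupos m
    rw [hmm] at h1
    have h2 := hupos m'
    have hceq := two_primes (uu m') (huu m') (cR m) (cR m') (hcvpos m) (hcvpos m') h1 h2
    have heps : eps hnd (m+1) = eps hnd (m'+1) := by
      have h3 := hcw m
      rw [hceq, hcw m'] at h3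
      exact_mod_cast h3.symm
    have := hepsinj heps
    omega
  have hmem : ∀ m, uu m ∈ {u ∈ 𝓕 | u.w (Φ (fser hnd)) ≠ 0} := by
    intro m
    obtain ⟨h, hh⟩ := hcdvd m
    refine ⟨huu m, ?_⟩
    rw [hh, map_mul, (uu m).map_mul']
    have hpos : (0:EReal) < (uu m).w (Φ (PowerSeries.X - PowerSeries.C (cR m)))
        + (uu m).w (Φ h) :=
      lt_of_lt_of_le (hupos m) (le_add_of_nonneg_right (hnneg _ (huu m) h))
    exact ne_of_gt hpos
  have hfinS := hC (fser hnd) (fser_ne_zero hnd)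
  exact (Set.infinite_of_injective_forall_mem huinj hmem) hfinS

/-- Let `K` be a field complete with respect to a non-discrete rank-1
valuation, with valuation ring `R`. Then `R[[X]]` is not a generalized Krull domain:
no family of rank-1 valuations of `Quot(R[[X]])` satisfies the generalized Krull
conditions for `R[[X]]`. -/
theorem statement13 {K : Type*} [Field K] (v : AddRealValuation K)
    (hcomp : v.IsComplete) (hnd : v.Nondiscrete) :
    ¬ ∃ 𝓕 : Set (AddRealValuation (FractionRing (PowerSeries v.subring))),
      IsGKFamily (PowerSeries v.subring) (FractionRing (PowerSeries v.subring)) 𝓕 :=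
  statement13_aux v hcomp hnd
end

section
/- Let (K, w) be a complete non-archimedean rank-1 valued field with valuation ring R and maximal ideal 𝔪. Then R[[X]] = ∩_{a ∈ 𝔪, a≠0} R{X/a}, where R{X/a} = {Σ f_i X^i ∈ K[[X]] : w(f_i) + i·w(a) ≥ 0 for all i, and w(f_i) + i·w(a) → ∞}. That is, a power series over K has all coefficients in R if and only if it lies in R{X/a} for every nonzero a ∈ 𝔪. -/
open PowerSeries Filter Set

/-- Let `(K, w)` be a complete non-discrete rank-1 valued field with
valuation ring `R` and maximal ideal `𝔪`. Then `R[[X]] = ⋂_{0 ≠ a ∈ 𝔪} R{X/a}`: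
a power series over `K` has all coefficients in `R` iff for every nonzero `a ∈ 𝔪`
it satisfies `w fᵢ + i · w a ≥ 0` for all `i` and `w fᵢ + i · w a → ∞`. -/
theorem statement18 {K : Type*} [Field K] (v : AddRealValuation K)
    (hcomp : v.IsComplete) (hnd : v.Nondiscrete)
    (f : PowerSeries K) :
    (∀ i : ℕ, 0 ≤ v.w (PowerSeries.coeff i f)) ↔
    (∀ a : K, a ≠ 0 → 0 < v.w a →
      (∀ i : ℕ, 0 ≤ v.w (PowerSeries.coeff i f) + (i : EReal) * v.w a) ∧
      (∀ M : ℝ, ∃ N : ℕ, ∀ i ≥ N,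
        (M : EReal) ≤ v.w (PowerSeries.coeff i f) + (i : EReal) * v.w a)) := by
  constructor
  · intro h a ha hwa
    obtain ⟨ε, hε⟩ : ∃ r : ℝ, v.w a = (r : EReal) := v.finite' a ha
    have hεpos : 0 < ε := by rw [hε] at hwa; exact_mod_cast hwa
    constructor
    · intro i
      have h1 : (0:EReal) ≤ (i : EReal) * v.w a := by
        apply mul_nonneg
        · exact_mod_cast Nat.zero_le i
        · exact le_of_lt hwa
      calc (0:EReal) = 0 + 0 := (add_zero 0).symm
        _ ≤ _ := add_le_add (h i) h1
    · intro M
      refine ⟨⌈M / ε⌉₊ + 1, fun i hi => ?_⟩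
      have hMi : M ≤ i * ε := by
        have : M / ε ≤ (i : ℝ) := le_trans (Nat.le_ceil _)
          (by exact_mod_cast le_trans (Nat.le_succ _) hi)
        calc M = (M / ε) * ε := by field_simp
          _ ≤ i * ε := by nlinarith
      have h1 : (M : EReal) ≤ (i : EReal) * v.w a := by
        rw [hε]
        calc (M : EReal) ≤ ((i * ε : ℝ) : EReal) := by exact_mod_cast hMi
          _ = (i : EReal) * (ε : EReal) := by
              rw [EReal.coe_mul]; norm_cast
      calc (M : EReal) = 0 + M := (zero_add _).symm
        _ ≤ _ := add_le_add (h i) h1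
  · intro h i
    by_contra hneg
    push_neg at hneg
    have hfne : PowerSeries.coeff i f ≠ 0 := by
      intro h0
      rw [h0, v.map_zero'] at hneg
      exact (not_le.mpr hneg) le_top
    obtain ⟨r, hr⟩ := v.finite' _ hfne
    have hrneg : r < 0 := by rw [hr] at hneg; exact_mod_cast hneg
    obtain ⟨a, hwa0, hwalt⟩ := hnd (-r / (i + 1)) (div_pos (by linarith) (by positivity))
    have ha : a ≠ 0 := by
      intro h0; rw [h0, v.map_zero'] at hwalt
      exact (not_le.mpr hwalt) le_top
    obtain ⟨s, hs⟩ := v.finite' a ha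
    have hspos : 0 < s := by rw [hs] at hwa0; exact_mod_cast hwa0
    have hslt : s < -r / (i + 1) := by rw [hs] at hwalt; exact_mod_cast hwalt
    have := (h a ha hwa0).1 i
    rw [hr, hs] at this
    have hlt : r + i * s < 0 := by
      rw [lt_div_iff₀ (by positivity : (0:ℝ) < (i:ℝ) + 1)] at hslt
      nlinarith
    have key : (0:EReal) ≤ ((r + i * s : ℝ) : EReal) := by
      push_cast
      exact this
    have : (0:ℝ) ≤ r + i * s := by exact_mod_cast key
    linarith
end
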